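/- arXiv:2406.19252 — 4 statements merged into one kernel-verified Lean document; each statement's English description precedes it below -/
import Mathlib

section
/- Let n ≥ 1 and let X ⊆ S^{n-1} be a non-empty F_σ set (a countable union of closed sets). Then there exists a discrete set E ⊆ 𝔻ⁿ which is separated and well-approximated, with L_rad(E) ⊇ X and δ(E) = dim_H X; moreover every separated and well-approximated discrete E ⊆ 𝔻ⁿ with L_rad(E) ⊇ X satisfies δ(E) ≥ dim_H X. Consequently, dim_H X equals the minimum of δ(E) over all separated and well-approximated discrete E ⊆ 𝔻ⁿ with L_rad(E) ⊇ X. -/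
open Metric Set Filter MeasureTheory Function
open scoped ENNReal NNReal

noncomputable section

/-- Points of `ℝⁿ` (Euclidean space). -/
abbrev Pt (n : ℕ) := EuclideanSpace ℝ (Fin n)

/-- `E` is a discrete set: every point of `E` is isolated in `E`. -/
def IsDiscreteSet {n : ℕ} (E : Set (Pt n)) : Prop :=
  ∀ x ∈ E, ∃ r > 0, closedBall x r ∩ E = {x}

/-- The limit set `L(E) = cl(E) \ E`. -/
def limitSet {n : ℕ} (E : Set (Pt n)) : Set (Pt n) := closure E \ E

/-- `E ⊆ 𝔻ⁿ` is separated. -/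
def SeparatedSet {n : ℕ} (E : Set (Pt n)) : Prop :=
  ∃ c₁ : ℝ, 0 < c₁ ∧ c₁ < 1 ∧ ∀ x ∈ E, closedBall x (c₁ * (1 - ‖x‖)) ∩ E = {x}

/-- `E ⊆ 𝔻ⁿ` is well-approximated. -/
def WellApproximated {n : ℕ} (E : Set (Pt n)) : Prop :=
  ∃ c₂ : ℝ, 1 ≤ c₂ ∧ ∀ x ∈ E, ∃ z ∈ limitSet E, dist x z ≤ c₂ * (1 - ‖x‖)

/-- `E` is `α`-separated. -/
def AlphaSeparated {n : ℕ} (E : Set (Pt n)) (α : ℝ) : Prop :=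
  ∃ c₁ : ℝ, 0 < c₁ ∧ ∀ x ∈ E, closedBall x (c₁ * (1 - ‖x‖) ^ α) ∩ E = {x}

/-- `E` is `β`-well-approximated. -/
def BetaWellApproximated {n : ℕ} (E : Set (Pt n)) (β : ℝ) : Prop :=
  ∃ c₂ : ℝ, 1 ≤ c₂ ∧ ∀ x ∈ E, ∃ z ∈ limitSet E, dist x z ≤ c₂ * (1 - ‖x‖) ^ β

/-- The accumulation series `S_E(s) = ∑_{x ∈ E} (1 - |x|)^s` (valued in `ℝ≥0∞`). -/
def accSeries {n : ℕ} (E : Set (Pt n)) (s : ℝ) : ℝ≥0∞ :=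
  ∑' x : E, ENNReal.ofReal ((1 - ‖(x : Pt n)‖) ^ s)

/-- The critical exponent `δ(E) = inf { s ≥ 0 : S_E(s) < ∞ }`, with `inf ∅ = ∞`. -/
def critExp {n : ℕ} (E : Set (Pt n)) : ℝ≥0∞ :=
  ⨅ (s : ℝ≥0) (_ : accSeries E (s : ℝ) < ⊤), (s : ℝ≥0∞)

/-- The set of `c`-radial limit points of `E`. -/
def radialPoints {n : ℕ} (E : Set (Pt n)) (c : ℝ) : Set (Pt n) :=
  {z | ‖z‖ = 1 ∧ ∀ r > 0, ∃ x ∈ E,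
    dist x z ≤ c * (1 - ‖x‖) ∧ c * (1 - ‖x‖) ≤ c * r}

/-- The radial limit set `L_rad(E) = ⋃_{c ≥ 1} L_c(E)`. -/
def radialLimitSet {n : ℕ} (E : Set (Pt n)) : Set (Pt n) :=
  ⋃ c ∈ Ici (1 : ℝ), radialPoints E c

/-- The set of `(γ, c)`-radial limit points of `E`. -/
def gammaRadialPoints {n : ℕ} (E : Set (Pt n)) (γ c : ℝ) : Set (Pt n) :=
  {z | z ∈ limitSet E ∧ ∀ r > 0, ∃ x ∈ E,
    dist x z ≤ c * (1 - ‖x‖) ^ γ ∧ c * (1 - ‖x‖) ^ γ ≤ c * r ^ γ}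

/-- The `γ`-radial limit set `L_rad^γ(E) = ⋃_{c ≥ 1} L_c^γ(E)`. -/
def gammaRadialLimitSet {n : ℕ} (E : Set (Pt n)) (γ : ℝ) : Set (Pt n) :=
  ⋃ c ∈ Ici (1 : ℝ), gammaRadialPoints E γ c

/-- The packing number `N_δ(F)`: the maximal cardinality of a packing of `F` by
pairwise disjoint closed balls of radius `δ` centred in `F`. -/
def packingNumber {n : ℕ} (F : Set (Pt n)) (δ : ℝ) : ℕ∞ :=
  ⨆ (Z : Finset (Pt n)) (_ : ↑Z ⊆ F)
    (_ : (Z : Set (Pt n)).PairwiseDisjoint fun x => closedBall x δ), (Z.card : ℕ∞)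

/-- The upper box dimension `limsup_{δ → 0⁺} log N_δ(F) / (-log δ)`. -/
def upperBoxDim {n : ℕ} (F : Set (Pt n)) : ℝ≥0∞ :=
  limsup (fun δ : ℝ =>
    ENNReal.ofReal (Real.log ((packingNumber F δ).toNat : ℝ) / (-Real.log δ)))
    (nhdsWithin 0 (Ioi 0))

/-- The lower box dimension `liminf_{δ → 0⁺} log N_δ(F) / (-log δ)`. -/
def lowerBoxDim {n : ℕ} (F : Set (Pt n)) : ℝ≥0∞ :=
  liminf (fun δ : ℝ =>
    ENNReal.ofReal (Real.log ((packingNumber F δ).toNat : ℝ) / (-Real.log δ)))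
    (nhdsWithin 0 (Ioi 0))


-- ## Auxiliary lemmas

lemma dist_of_disjoint_closedBall {n : ℕ} {x y : Pt n} {r₁ r₂ : ℝ} (h₁ : 0 ≤ r₁) (h₂ : 0 ≤ r₂)
    (h : Disjoint (closedBall x r₁) (closedBall y r₂)) : r₁ + r₂ < dist x y := by
  by_contra hc
  push_neg at hc
  rcases le_or_gt (dist x y) r₁ with hle | hlt
  · exact Set.disjoint_left.1 h (by simpa [mem_closedBall, dist_comm] using hle)
      (by simpa [mem_closedBall] using h₂)
  · have hd : 0 < dist x y := h₁.trans_lt hlt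
    set w : Pt n := AffineMap.lineMap x y (r₁ / dist x y) with hw
    have hw1 : w ∈ closedBall x r₁ := by
      rw [mem_closedBall, hw, dist_lineMap_left, Real.norm_eq_abs,
        abs_of_nonneg (by positivity), div_mul_cancel₀ _ hd.ne']
    have hw2 : w ∈ closedBall y r₂ := by
      rw [mem_closedBall, hw, dist_lineMap_right, Real.norm_eq_abs,
        abs_of_nonneg (by rw [sub_nonneg]; exact (div_le_one hd).2 hlt.le),
        sub_mul, one_mul, div_mul_cancel₀ _ hd.ne']
      linarith
    exact Set.disjoint_left.1 h hw1 hw2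

lemma norm_shrink {n : ℕ} {z : Pt n} (hz : ‖z‖ = 1) {ρ : ℝ} (hρ : ρ ≤ 1) :
    ‖(1 - ρ) • z‖ = 1 - ρ := by
  rw [norm_smul, hz, mul_one, Real.norm_eq_abs, abs_of_nonneg (by linarith)]

lemma dist_shrink {n : ℕ} {z : Pt n} (hz : ‖z‖ = 1) {ρ : ℝ} (hρ : 0 ≤ ρ) :
    dist ((1 - ρ) • z) z = ρ := by
  rw [dist_eq_norm]
  have : (1 - ρ) • z - z = (-ρ) • z := by
    rw [sub_smul, one_smul, neg_smul]; abel
  rw [this, norm_smul, hz, mul_one, Real.norm_eq_abs, abs_of_nonpos (by linarith), neg_neg]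

lemma rpow_add_le {a b s : ℝ} (ha : 0 ≤ a) (hb : 0 ≤ b) (hs : 0 ≤ s) :
    (a + b) ^ s ≤ 2 ^ s * (a ^ s + b ^ s) := by
  have h1 : a + b ≤ 2 * max a b := by
    rcases max_cases a b with ⟨h, h'⟩ | ⟨h, h'⟩ <;> rw [h] <;> linarith
  calc (a + b) ^ s ≤ (2 * max a b) ^ s :=
        Real.rpow_le_rpow (by positivity) h1 hs
    _ = 2 ^ s * (max a b) ^ s := Real.mul_rpow (by norm_num) (le_max_of_le_left ha)
    _ ≤ 2 ^ s * (a ^ s + b ^ s) := by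
        gcongr
        rcases max_cases a b with ⟨h, _⟩ | ⟨h, _⟩ <;> rw [h]
        · nlinarith [Real.rpow_nonneg hb s]
        · nlinarith [Real.rpow_nonneg ha s]



lemma cover_lemma {n : ℕ} (F : Set (Pt n)) (hFc : IsClosed F) (hFs : F ⊆ sphere (0:Pt n) 1)
    (s : ℝ) (hs : 0 < s) (hμ : μH[s] F = 0) (δ₀ ε : ℝ) (hδ : 0 < δ₀) (hε : 0 < ε) :
    ∃ S : Finset (Pt n × ℝ),
      (∀ p ∈ S, p.1 ∈ F ∧ 0 < p.2 ∧ p.2 ≤ δ₀) ∧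
      (∀ p ∈ S, ∀ q ∈ S, p ≠ q → 3 * (p.2 + q.2) ≤ dist p.1 q.1) ∧
      (F ⊆ ⋃ p ∈ S, closedBall p.1 (15 * p.2)) ∧
      (∑ p ∈ S, p.2 ^ s ≤ ε) := by
  classical
  set η := min δ₀ 1 with hηdef
  have hη : 0 < η := lt_min hδ one_pos
  have hηδ : η ≤ δ₀ := min_le_left _ _
  have hη1 : η ≤ 1 := min_le_right _ _
  set ε₁ := ε / (2 * 4 ^ s) with hε₁def
  set ε₂ := ε / (4 * 2 ^ s) with hε₂def
  have h4s : (0:ℝ) < 4 ^ s := Real.rpow_pos_of_pos (by norm_num) s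
  have h2s : (0:ℝ) < 2 ^ s := Real.rpow_pos_of_pos (by norm_num) s
  have hε₁ : 0 < ε₁ := by positivity
  have hε₂ : 0 < ε₂ := by positivity
  -- extract a cover from the Hausdorff measure being 0
  have hinner : (⨅ (t : ℕ → Set (Pt n)) (_ : F ⊆ ⋃ i, t i)
      (_ : ∀ i, EMetric.diam (t i) ≤ ENNReal.ofReal η),
      ∑' i, ⨆ _ : (t i).Nonempty, EMetric.diam (t i) ^ s) < ENNReal.ofReal ε₁ := by
    have h0 := Measure.hausdorffMeasure_apply s F
    rw [hμ] at h0
    have hle : (⨅ (t : ℕ → Set (Pt n)) (_ : F ⊆ ⋃ i, t i)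
        (_ : ∀ i, EMetric.diam (t i) ≤ ENNReal.ofReal η),
        ∑' i, ⨆ _ : (t i).Nonempty, EMetric.diam (t i) ^ s) ≤ 0 := by
      rw [h0]
      exact le_iSup_of_le (ENNReal.ofReal η) (le_iSup_of_le (ENNReal.ofReal_pos.2 hη) le_rfl)
    exact lt_of_le_of_lt hle (ENNReal.ofReal_pos.2 hε₁)
  simp only [iInf_lt_iff] at hinner
  obtain ⟨t, hcov, hdiam, hsum⟩ := hinner
  set z : ℕ → Pt n := fun i => if h : (t i ∩ F).Nonempty then h.choose else 0 with hzdef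
  have hz : ∀ i, (t i ∩ F).Nonempty → z i ∈ t i ∩ F := by
    intro i hi
    simp only [hzdef, dif_pos hi]
    exact hi.choose_spec
  set d : ℕ → ℝ := fun i => (EMetric.diam (t i)).toReal with hddef
  have hdtop : ∀ i, EMetric.diam (t i) ≠ ⊤ :=
    fun i => ((hdiam i).trans_lt ENNReal.ofReal_lt_top).ne
  have hd0 : ∀ i, 0 ≤ d i := fun i => ENNReal.toReal_nonneg
  have hdη : ∀ i, d i ≤ η := fun i => ENNReal.toReal_le_of_le_ofReal hη.le (hdiam i)
  set η' : ℕ → ℝ := fun i => min η ((ε₂ * (1/2)^i) ^ s⁻¹) with hη'def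
  have hη'pos : ∀ i, 0 < η' i := by
    intro i
    exact lt_min hη (Real.rpow_pos_of_pos (by positivity) _)
  have hη'η : ∀ i, η' i ≤ η := fun i => min_le_left _ _
  have hη's : ∀ i, η' i ^ s ≤ ε₂ * (1/2)^i := by
    intro i
    calc η' i ^ s ≤ ((ε₂ * (1/2)^i) ^ s⁻¹) ^ s :=
          Real.rpow_le_rpow (hη'pos i).le (min_le_right _ _) hs.le
      _ = (ε₂ * (1/2)^i) ^ (s⁻¹ * s) := by
          rw [← Real.rpow_mul (by positivity)]
      _ = ε₂ * (1/2)^i := by rw [inv_mul_cancel₀ hs.ne', Real.rpow_one]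
  set r : ℕ → ℝ := fun i => if (t i ∩ F).Nonempty then 2 * d i + η' i else 0 with hrdef
  have hr_nonneg : ∀ i, 0 ≤ r i := by
    intro i
    simp only [hrdef]
    split
    · have := hd0 i; have := (hη'pos i).le; positivity
    · exact le_rfl
  have hr_le : ∀ i, r i ≤ 3 * η := by
    intro i
    simp only [hrdef]
    split
    · have := hdη i; have := hη'η i; linarith
    · linarith
  have hrpos : ∀ i, (t i ∩ F).Nonempty → 0 < r i := by
    intro i hi
    simp only [hrdef, if_pos hi]
    have := hd0 i; have := hη'pos i; linarith
  have hrused : ∀ i, 0 < r i → (t i ∩ F).Nonempty := by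
    intro i hi
    by_contra h
    simp only [hrdef, if_neg h] at hi
    exact lt_irrefl _ hi
  have hrs : ∀ i, (t i ∩ F).Nonempty → r i ^ s ≤ 4 ^ s * d i ^ s + 2 ^ s * η' i ^ s := by
    intro i hi
    simp only [hrdef, if_pos hi]
    calc (2 * d i + η' i) ^ s ≤ 2 ^ s * ((2 * d i) ^ s + η' i ^ s) :=
          rpow_add_le (by have := hd0 i; positivity) (hη'pos i).le hs.le
      _ = 2 ^ s * (2 ^ s * d i ^ s + η' i ^ s) := by
          rw [Real.mul_rpow (by norm_num) (hd0 i)]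
      _ = (2*2) ^ s * d i ^ s + 2 ^ s * η' i ^ s := by
          rw [Real.mul_rpow (by norm_num) (by norm_num)]; ring
      _ = 4 ^ s * d i ^ s + 2 ^ s * η' i ^ s := by norm_num
  -- open ball cover
  have hcov2 : F ⊆ ⋃ i, ball (z i) (r i) := by
    intro w hw
    obtain ⟨i, hi⟩ := mem_iUnion.1 (hcov hw)
    have hused : (t i ∩ F).Nonempty := ⟨w, hi, hw⟩
    have hzi := hz i hused
    refine mem_iUnion.2 ⟨i, ?_⟩
    rw [mem_ball]
    have hdist : dist w (z i) ≤ d i := by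
      rw [dist_edist]
      exact ENNReal.toReal_mono (hdtop i) (EMetric.edist_le_diam_of_mem hi hzi.1)
    have : d i < r i := by
      simp only [hrdef, if_pos hused]
      have := hd0 i; have := hη'pos i; linarith
    linarith
  have hFcomp : IsCompact F := (isCompact_sphere (0:Pt n) 1).of_isClosed_subset hFc hFs
  obtain ⟨T, hT⟩ := hFcomp.elim_finite_subcover (fun i => ball (z i) (r i))
    (fun i => isOpen_ball) hcov2
  set V : Set ℕ := {i | i ∈ T ∧ 0 < r i} with hVdef
  obtain ⟨u, huV, hdisj, hcov3⟩ :=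
    Vitali.exists_disjoint_subfamily_covering_enlargement_closedBall V z r (3 * η)
      (fun i _ => hr_le i) 4 (by norm_num)
  have hufin : u.Finite := T.finite_toSet.subset (fun i hi => (huV hi).1)
  have hupos : ∀ i ∈ u, 0 < r i := fun i hi => (huV hi).2
  have huused : ∀ i ∈ u, (t i ∩ F).Nonempty := fun i hi => hrused i (hupos i hi)
  set S : Finset (Pt n × ℝ) := Finset.image (fun i => (z i, r i / 3)) hufin.toFinset with hSdef
  have hinj : ∀ i ∈ hufin.toFinset, ∀ j ∈ hufin.toFinset,
      (z i, r i / 3) = (z j, r j / 3) → i = j := by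
    intro i hi j hj hpq
    rw [Set.Finite.mem_toFinset] at hi hj
    by_contra hij
    have hd := hdisj hi hj hij
    have := dist_of_disjoint_closedBall (hupos i hi).le (hupos j hj).le hd
    have h1 : z i = z j := congrArg Prod.fst hpq
    rw [h1, dist_self] at this
    have := hupos i hi; have := hupos j hj
    linarith
  have hSmem : ∀ p ∈ S, ∃ i ∈ u, p = (z i, r i / 3) := by
    intro p hp
    simp only [hSdef, Finset.mem_image, Set.Finite.mem_toFinset] at hp
    obtain ⟨i, hi, hpi⟩ := hp
    exact ⟨i, hi, hpi.symm⟩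
  refine ⟨S, ?_, ?_, ?_, ?_⟩
  · intro p hp
    obtain ⟨i, hi, rfl⟩ := hSmem p hp
    have hused := huused i hi
    have hzi := hz i hused
    refine ⟨hzi.2, by have := hupos i hi; positivity, ?_⟩
    have := hr_le i
    simp only
    linarith
  · intro p hp q hq hpq
    obtain ⟨i, hi, rfl⟩ := hSmem p hp
    obtain ⟨j, hj, rfl⟩ := hSmem q hq
    have hij : i ≠ j := fun h => hpq (by rw [h])
    have hd := hdisj hi hj hij
    have := dist_of_disjoint_closedBall (hupos i hi).le (hupos j hj).le hd
    simp only
    linarith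
  · intro w hw
    obtain ⟨i, hiT, hib⟩ := Set.mem_iUnion₂.1 (hT hw)
    have hri : 0 < r i := by
      rw [mem_ball] at hib
      exact dist_nonneg.trans_lt hib
    obtain ⟨b, hb, hsub⟩ := hcov3 i ⟨hiT, hri⟩
    have hwb : w ∈ closedBall (z b) (4 * r b) := hsub (ball_subset_closedBall hib)
    refine Set.mem_biUnion (?_ : ((z b, r b / 3) : Pt n × ℝ) ∈ S) ?_
    · simp only [hSdef, Finset.mem_image, Set.Finite.mem_toFinset]
      exact ⟨b, hb, rfl⟩
    · rw [mem_closedBall] at hwb ⊢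
      have := hupos b hb
      calc dist w (z b) ≤ 4 * r b := hwb
        _ ≤ 15 * (r b / 3) := by linarith
  · rw [hSdef, Finset.sum_image hinj]
    have hterm : ∀ i ∈ hufin.toFinset,
        (r i / 3) ^ s ≤ 4 ^ s * d i ^ s + 2 ^ s * (ε₂ * (1/2)^i) := by
      intro i hi
      rw [Set.Finite.mem_toFinset] at hi
      have h1 : (r i / 3) ^ s ≤ r i ^ s :=
        Real.rpow_le_rpow (by have := hupos i hi; positivity) (by have := hupos i hi; linarith) hs.le
      have h2 := hrs i (huused i hi)
      have h3 := hη's i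
      have h4 : 2 ^ s * η' i ^ s ≤ 2 ^ s * (ε₂ * (1/2)^i) := by
        apply mul_le_mul_of_nonneg_left h3 h2s.le
      linarith
    calc ∑ i ∈ hufin.toFinset, (r i / 3) ^ s
        ≤ ∑ i ∈ hufin.toFinset, (4 ^ s * d i ^ s + 2 ^ s * (ε₂ * (1/2)^i)) :=
          Finset.sum_le_sum hterm
      _ = 4 ^ s * ∑ i ∈ hufin.toFinset, d i ^ s
          + 2 ^ s * ε₂ * ∑ i ∈ hufin.toFinset, (1/2)^i := by
          rw [Finset.sum_add_distrib, Finset.mul_sum, Finset.mul_sum]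
          ring_nf
      _ ≤ 4 ^ s * ε₁ + 2 ^ s * ε₂ * 2 := by
          gcongr
          · -- key: ∑ d i ^ s ≤ ε₁ via the ENNReal tsum bound
            have hENN : ENNReal.ofReal (∑ i ∈ hufin.toFinset, d i ^ s) < ENNReal.ofReal ε₁ := by
              rw [ENNReal.ofReal_sum_of_nonneg (fun i _ => Real.rpow_nonneg (hd0 i) s)]
              refine lt_of_le_of_lt ?_ hsum
              refine le_trans (Finset.sum_le_sum ?_) (ENNReal.sum_le_tsum _)
              intro i hi
              rw [Set.Finite.mem_toFinset] at hi
              have hne : (t i).Nonempty := ((huused i hi).mono (Set.inter_subset_left)).mono le_rfl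
              rw [iSup_pos hne]
              rw [← ENNReal.ofReal_toReal (hdtop i)]
              rw [ENNReal.ofReal_rpow_of_nonneg (hd0 i) hs.le]
            have := (ENNReal.ofReal_lt_ofReal_iff hε₁).1 hENN
            exact this.le
          · -- geometric sum
            refine le_trans (Finset.sum_le_sum_of_subset_of_nonneg
              (fun i hi => Finset.mem_range.2 ?_) (fun i _ _ => by positivity)
              (s := hufin.toFinset) (t := Finset.range ((hufin.toFinset.sup id) + 1))) ?_
            · exact Nat.lt_succ_of_le (Finset.le_sup (f := id) hi)
            · exact sum_geometric_two_le _
      _ = ε := by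
          rw [hε₁def, hε₂def]
          field_simp
          ring


lemma radialPoints_mono {n : ℕ} (E : Set (Pt n)) {c c' : ℝ} (hc : 0 < c) (hcc : c ≤ c') :
    radialPoints E c ⊆ radialPoints E c' := by
  rintro z ⟨hz1, hz2⟩
  refine ⟨hz1, fun r hr => ?_⟩
  obtain ⟨x, hxE, h1, h2⟩ := hz2 r hr
  have hx0 : 0 ≤ 1 - ‖x‖ := nonneg_of_mul_nonneg_right (dist_nonneg.trans h1) hc
  have h3 : 1 - ‖x‖ ≤ r := le_of_mul_le_mul_left h2 hc
  exact ⟨x, hxE, h1.trans (by nlinarith), by nlinarith⟩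

lemma dimH_le_critExp {n : ℕ} (X E : Set (Pt n)) (hXne : X.Nonempty)
    (hE : E ⊆ ball 0 1) (hXrad : X ⊆ radialLimitSet E) : dimH X ≤ critExp E := by
  have hballE : ∀ x : Pt n, x ∈ E → 0 < 1 - ‖x‖ := by
    intro x hx
    have := mem_ball_zero_iff.1 (hE hx)
    linarith
  rw [critExp]
  refine le_iInf fun s => le_iInf fun hs => ?_
  rcases eq_or_lt_of_le (zero_le : (0:ℝ≥0) ≤ s) with hs0 | hs0
  · exfalso
    have hfin : E.Finite := by
      by_contra hinf
      have hinf' : E.Infinite := hinf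
      haveI := hinf'.to_subtype
      rw [accSeries] at hs
      have : ∀ x : E, ENNReal.ofReal ((1 - ‖(x : Pt n)‖) ^ ((s:ℝ))) = 1 := by
        intro x
        rw [← hs0]
        norm_num [Real.rpow_zero]
      rw [tsum_congr this, ENNReal.tsum_const_eq_top_of_ne_zero one_ne_zero] at hs
      exact (lt_irrefl _ hs).elim
    have hu : ∃ u > 0, ∀ x ∈ E, u ≤ 1 - ‖x‖ := by
      rcases E.eq_empty_or_nonempty with hEe | hEne
      · exact ⟨1, one_pos, by simp [hEe]⟩
      · set G := hfin.toFinset.image (fun x => 1 - ‖x‖) with hGdef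
        have hGne : G.Nonempty := by
          apply Finset.image_nonempty.2
          rwa [Set.Finite.toFinset_nonempty]
        refine ⟨G.min' hGne, ?_, ?_⟩
        · obtain ⟨x, hxG, hxm⟩ := Finset.mem_image.1 (G.min'_mem hGne)
          rw [← hxm]
          exact hballE x (hfin.mem_toFinset.1 hxG)
        · intro x hx
          exact Finset.min'_le _ _ (Finset.mem_image_of_mem _ (hfin.mem_toFinset.2 hx))
    obtain ⟨u, hu0, huE⟩ := hu
    obtain ⟨z0, hz0⟩ := hXne
    obtain ⟨c, hc, hzc⟩ : ∃ c, 1 ≤ c ∧ z0 ∈ radialPoints E c := by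
      have := hXrad hz0
      rw [radialLimitSet, mem_iUnion₂] at this
      obtain ⟨c, hc, h⟩ := this
      exact ⟨c, hc, h⟩
    obtain ⟨x, hxE, h1, h2⟩ := hzc.2 (u/2) (by positivity)
    have hcpos : (0:ℝ) < c := lt_of_lt_of_le one_pos hc
    have h3 : 1 - ‖x‖ ≤ u/2 := le_of_mul_le_mul_left h2 hcpos
    have := huE x hxE
    linarith
  · -- 0 < s
    have hsne : (∑' x : E, ENNReal.ofReal ((1 - ‖(x : Pt n)‖) ^ ((s:ℝ≥0):ℝ))) ≠ ⊤ := by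
      rw [accSeries] at hs; exact hs.ne
    have hcnt : E.Countable := by
      have hsupp := Summable.countable_support_ennreal hsne
      have hall : Function.support
          (fun x : E => ENNReal.ofReal ((1 - ‖(x : Pt n)‖) ^ ((s:ℝ≥0):ℝ))) = Set.univ := by
        ext x
        simp only [Function.mem_support, Set.mem_univ, iff_true]
        have h1 : (0:ℝ) < (1 - ‖(x : Pt n)‖) ^ ((s:ℝ≥0):ℝ) :=
          Real.rpow_pos_of_pos (hballE x x.2) _
        simp [ENNReal.ofReal_eq_zero, not_le, h1]
      rw [hall] at hsupp
      rw [Set.countable_univ_iff] at hsupp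
      exact Set.countable_coe_iff.1 hsupp
    have hXsub : X ⊆ ⋃ k : ℕ, radialPoints E ((k:ℝ)+1) := by
      intro z hz
      obtain ⟨c, hc, hzc⟩ : ∃ c, 1 ≤ c ∧ z ∈ radialPoints E c := by
        have := hXrad hz
        rw [radialLimitSet, mem_iUnion₂] at this
        obtain ⟨c, hc', h⟩ := this
        exact ⟨c, hc', h⟩
      refine mem_iUnion.2 ⟨⌈c⌉₊, radialPoints_mono E (lt_of_lt_of_le one_pos hc) ?_ hzc⟩
      calc c ≤ (⌈c⌉₊ : ℝ) := Nat.le_ceil c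
        _ ≤ (⌈c⌉₊ : ℝ) + 1 := by linarith
    refine le_trans (dimH_mono hXsub) ?_
    rw [dimH_iUnion]
    refine iSup_le fun k => ?_
    set c : ℝ := (k:ℝ) + 1 with hcdef
    have hc0 : (0:ℝ) < c := by positivity
    set A := radialPoints E c with hAdef
    apply dimH_le_of_hausdorffMeasure_ne_top (d := s)
    -- bound the Hausdorff measure
    set J : ℕ → Type := fun m => {x : Pt n // x ∈ E ∧ 1 - ‖x‖ ≤ (1/2)^m} with hJdef
    haveI hcnt' : ∀ m : ℕ, Countable (J m) := by
      intro m
      exact Set.Countable.to_subtype (hcnt.mono (fun x hx => hx.1))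
    set B : ℝ≥0∞ := ENNReal.ofReal ((2*c)^((s:ℝ≥0):ℝ)) * accSeries E ((s:ℝ≥0):ℝ) with hBdef
    have hdiam : ∀ (m : ℕ) (i : J m),
        EMetric.diam (closedBall (i.1 : Pt n) (c * (1 - ‖(i.1 : Pt n)‖)))
          ≤ ENNReal.ofReal (2*c*(1/2)^m) := by
      intro m i
      apply EMetric.diam_le
      intro x hx y hy
      rw [edist_dist]
      have hρ := hballE _ i.2.1
      have hρm := i.2.2
      apply ENNReal.ofReal_le_ofReal
      rw [mem_closedBall] at hx hy
      have htri := dist_triangle x (i.1 : Pt n) y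
      rw [dist_comm (i.1 : Pt n) y] at htri
      nlinarith
    have key := Measure.hausdorffMeasure_le_liminf_tsum (d := ((s:ℝ≥0):ℝ)) A
      (l := atTop) (fun m => ENNReal.ofReal (2*c*(1/2)^m))
      (by
        have h1 : Tendsto (fun m : ℕ => 2*c*(1/2)^m) atTop (nhds 0) := by
          have := tendsto_pow_atTop_nhds_zero_of_lt_one (by norm_num : (0:ℝ) ≤ 1/2)
            (by norm_num : (1:ℝ)/2 < 1)
          simpa using this.const_mul (2*c)
        have h2 := (ENNReal.continuous_ofReal.tendsto 0).comp h1
        simpa [Function.comp_def] using h2)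
      (fun m (i : J m) => closedBall (i.1 : Pt n) (c * (1 - ‖(i.1 : Pt n)‖)))
      (Eventually.of_forall fun m i => hdiam m i)
      (by
        refine Eventually.of_forall fun m => fun z hz => ?_
        obtain ⟨x, hxE, h1, h2⟩ := hz.2 ((1/2)^m) (by positivity)
        have h3 : 1 - ‖x‖ ≤ (1/2)^m := le_of_mul_le_mul_left h2 hc0
        exact mem_iUnion.2 ⟨(⟨x, hxE, h3⟩ : J m), by rwa [mem_closedBall, dist_comm]⟩)
    have hfinal : μH[((s:ℝ≥0):ℝ)] A ≤ B := by
      refine key.trans ?_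
      have hbound : ∀ m : ℕ, (∑' i : J m,
          EMetric.diam (closedBall (i.1 : Pt n) (c * (1 - ‖(i.1 : Pt n)‖))) ^ ((s:ℝ≥0):ℝ)) ≤ B := by
        intro m
        have hterm : ∀ i : J m,
            EMetric.diam (closedBall (i.1 : Pt n) (c * (1 - ‖(i.1 : Pt n)‖))) ^ ((s:ℝ≥0):ℝ)
            ≤ ENNReal.ofReal ((2*c)^((s:ℝ≥0):ℝ)) *
              ENNReal.ofReal ((1 - ‖(i.1 : Pt n)‖) ^ ((s:ℝ≥0):ℝ)) := by
          intro i
          have hρ := hballE _ i.2.1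
          have hdb : EMetric.diam (closedBall (i.1 : Pt n) (c * (1 - ‖(i.1 : Pt n)‖)))
              ≤ ENNReal.ofReal (2 * (c * (1 - ‖(i.1 : Pt n)‖))) := by
            apply EMetric.diam_le
            intro x hx y hy
            rw [edist_dist]
            apply ENNReal.ofReal_le_ofReal
            rw [mem_closedBall] at hx hy
            have htri := dist_triangle x (i.1 : Pt n) y
            rw [dist_comm (i.1 : Pt n) y] at htri
            linarith
          calc EMetric.diam (closedBall (i.1 : Pt n) (c * (1 - ‖(i.1 : Pt n)‖))) ^ ((s:ℝ≥0):ℝ)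
              ≤ (ENNReal.ofReal (2 * (c * (1 - ‖(i.1 : Pt n)‖)))) ^ ((s:ℝ≥0):ℝ) :=
                ENNReal.rpow_le_rpow hdb (by positivity)
            _ = ENNReal.ofReal ((2 * (c * (1 - ‖(i.1 : Pt n)‖))) ^ ((s:ℝ≥0):ℝ)) := by
                rw [ENNReal.ofReal_rpow_of_nonneg (by positivity) (by positivity)]
            _ = ENNReal.ofReal ((2*c)^((s:ℝ≥0):ℝ) * (1 - ‖(i.1 : Pt n)‖) ^ ((s:ℝ≥0):ℝ)) := by
                rw [← Real.mul_rpow (by positivity) (by positivity)]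
                ring_nf
            _ = ENNReal.ofReal ((2*c)^((s:ℝ≥0):ℝ)) *
                ENNReal.ofReal ((1 - ‖(i.1 : Pt n)‖) ^ ((s:ℝ≥0):ℝ)) := by
                rw [ENNReal.ofReal_mul (by positivity)]
        calc (∑' i : J m,
            EMetric.diam (closedBall (i.1 : Pt n) (c * (1 - ‖(i.1 : Pt n)‖))) ^ ((s:ℝ≥0):ℝ))
            ≤ ∑' i : J m, ENNReal.ofReal ((2*c)^((s:ℝ≥0):ℝ)) *
              ENNReal.ofReal ((1 - ‖(i.1 : Pt n)‖) ^ ((s:ℝ≥0):ℝ)) := ENNReal.tsum_le_tsum hterm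
          _ = ENNReal.ofReal ((2*c)^((s:ℝ≥0):ℝ)) * ∑' i : J m,
              ENNReal.ofReal ((1 - ‖(i.1 : Pt n)‖) ^ ((s:ℝ≥0):ℝ)) := ENNReal.tsum_mul_left
          _ ≤ B := by
              rw [hBdef]
              gcongr
              rw [accSeries]
              exact ENNReal.tsum_comp_le_tsum_of_injective
                (f := fun i : J m => (⟨i.1, i.2.1⟩ : E))
                (by
                  intro a b hab
                  have h2 := congrArg Subtype.val hab
                  exact Subtype.ext h2) _
      calc liminf (fun m : ℕ => ∑' i : J m,
            EMetric.diam (closedBall (i.1 : Pt n) (c * (1 - ‖(i.1 : Pt n)‖))) ^ ((s:ℝ≥0):ℝ)) atTop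
          ≤ liminf (fun _ : ℕ => B) atTop := liminf_le_liminf (Eventually.of_forall hbound)
        _ = B := liminf_const _
    exact ne_top_of_le_ne_top (ENNReal.mul_lt_top ENNReal.ofReal_lt_top hs).ne hfinal


lemma construction {n : ℕ} (X : Set (Pt n)) (F : ℕ → Set (Pt n)) (hFc : ∀ k, IsClosed (F k))
    (hFs : ∀ k, F k ⊆ sphere (0:Pt n) 1) (hXF : X = ⋃ k, F k) :
    ∃ E : Set (Pt n), E ⊆ ball 0 1 ∧ SeparatedSet E ∧ WellApproximated E ∧
      X ⊆ radialLimitSet E ∧ ∀ s : ℝ≥0, dimH X < (s:ℝ≥0∞) → accSeries E (s:ℝ) < ⊤ := by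
  classical
  have hdX : dimH X ≠ ⊤ := by
    have h1 := dimH_mono (subset_univ X)
    rw [Real.dimH_univ_eq_finrank (Pt n)] at h1
    exact (h1.trans_lt (ENNReal.natCast_lt_top _)).ne
  set D : ℝ := (dimH X).toReal with hDdef
  have hD0 : 0 ≤ D := ENNReal.toReal_nonneg
  set sexp : ℕ → ℝ := fun t => D + 1/(t+1) with hsexpdef
  have hsexp_pos : ∀ t : ℕ, 0 < sexp t := fun t => by positivity
  have hFX : ∀ k, F k ⊆ X := fun k => hXF ▸ subset_iUnion F k
  have hμ : ∀ t : ℕ, μH[sexp t] (F (Nat.unpair t).1) = 0 := by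
    intro t
    have h1 : dimH (F (Nat.unpair t).1) < ((sexp t).toNNReal : ℝ≥0∞) := by
      refine lt_of_le_of_lt (dimH_mono (hFX _)) ?_
      have h2 : ((sexp t).toNNReal : ℝ≥0∞) = ENNReal.ofReal (sexp t) := rfl
      rw [h2]
      calc dimH X = ENNReal.ofReal D := (ENNReal.ofReal_toReal hdX).symm
        _ < ENNReal.ofReal (sexp t) := by
          rw [ENNReal.ofReal_lt_ofReal_iff (hsexp_pos t)]
          have : (0:ℝ) < 1/((t:ℝ)+1) := by positivity
          simp only [hsexpdef]
          linarith
    have h2 := hausdorffMeasure_of_dimH_lt h1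
    rwa [Real.coe_toNNReal _ (hsexp_pos t).le] at h2
  have hex : ∀ (t : ℕ) (δ : ℝ), ∃ S : Finset (Pt n × ℝ), 0 < δ →
      ((∀ p ∈ S, p.1 ∈ F (Nat.unpair t).1 ∧ 0 < p.2 ∧ p.2 ≤ δ) ∧
       (∀ p ∈ S, ∀ q ∈ S, p ≠ q → 3 * (p.2 + q.2) ≤ dist p.1 q.1) ∧
       (F (Nat.unpair t).1 ⊆ ⋃ p ∈ S, closedBall p.1 (15 * p.2)) ∧
       (∑ p ∈ S, p.2 ^ (sexp t) ≤ (1/2)^t)) := by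
    intro t δ
    by_cases hδ : 0 < δ
    · obtain ⟨S, h1, h2, h3, h4⟩ := cover_lemma (F (Nat.unpair t).1) (hFc _) (hFs _)
        (sexp t) (hsexp_pos t) (hμ t) δ ((1/2)^t) hδ (by positivity)
      exact ⟨S, fun _ => ⟨h1, h2, h3, h4⟩⟩
    · exact ⟨∅, fun h => absurd h hδ⟩
  choose C hC using hex
  set nextδ : ℝ → Finset (Pt n × ℝ) → ℝ := fun δ S =>
    if h : S.Nonempty then min (δ/2) (S.inf' h (fun p => p.2) / 10) else δ/2 with hnextδdef
  set δseq : ℕ → ℝ := fun t => Nat.rec ((1:ℝ)/2) (fun t' δp => nextδ δp (C t' δp)) t with hδseqdef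
  have hδ0 : δseq 0 = 1/2 := rfl
  have hδsucc : ∀ t, δseq (t+1) = nextδ (δseq t) (C t (δseq t)) := fun t => rfl
  have hδpos : ∀ t, 0 < δseq t := by
    intro t
    induction t with
    | zero => rw [hδ0]; norm_num
    | succ t ih =>
      rw [hδsucc, hnextδdef]
      dsimp only
      split
      · rename_i h
        apply lt_min (by linarith)
        have : 0 < (C t (δseq t)).inf' h (fun p => p.2) := by
          rw [Finset.lt_inf'_iff]
          intro p hp
          exact ((hC t (δseq t) ih).1 p hp).2.1
        linarith
      · linarith
  have hCp := fun t => hC t (δseq t) (hδpos t)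
  have hδhalf : ∀ t, δseq (t+1) ≤ δseq t / 2 := by
    intro t
    rw [hδsucc, hnextδdef]
    dsimp only
    split
    · exact min_le_left _ _
    · exact le_rfl
  have hδband : ∀ t, ∀ p ∈ C t (δseq t), δseq (t+1) ≤ p.2 / 10 := by
    intro t p hp
    rw [hδsucc, hnextδdef]
    have hne : (C t (δseq t)).Nonempty := ⟨p, hp⟩
    dsimp only
    rw [dif_pos hne]
    refine le_trans (min_le_right _ _) ?_
    have : (C t (δseq t)).inf' hne (fun p => p.2) ≤ p.2 := Finset.inf'_le _ hp
    linarith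
  have hδmono : ∀ t t', t ≤ t' → δseq t' ≤ δseq t := by
    have : ∀ t, δseq (t+1) ≤ δseq t := fun t =>
      (hδhalf t).trans (by have := hδpos t; linarith)
    intro t t' h
    exact antitone_nat_of_succ_le this h
  have hδle : ∀ t, δseq t ≤ (1/2)^t := by
    intro t
    induction t with
    | zero => rw [hδ0]; norm_num
    | succ t ih =>
      calc δseq (t+1) ≤ δseq t / 2 := hδhalf t
        _ ≤ (1/2)^t / 2 := by linarith
        _ = (1/2)^(t+1) := by ring
  have hδh : ∀ t, δseq t ≤ 1/2 := fun t => (hδmono 0 t (Nat.zero_le t)).trans_eq hδ0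
  set Ct : ℕ → Finset (Pt n × ℝ) := fun t => C t (δseq t) with hCtdef
  set E : Set (Pt n) := ⋃ t, (fun p : Pt n × ℝ => (1 - p.2) • p.1) '' (Ct t : Set (Pt n × ℝ))
    with hEdef
  have hmem : ∀ x, x ∈ E ↔ ∃ t, ∃ p ∈ Ct t, x = (1 - p.2) • p.1 := by
    intro x
    simp only [hEdef, mem_iUnion, Set.mem_image, Finset.mem_coe]
    constructor
    · rintro ⟨t, p, hp, rfl⟩; exact ⟨t, p, hp, rfl⟩
    · rintro ⟨t, p, hp, rfl⟩; exact ⟨t, p, hp, rfl⟩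
  -- basic facts about points
  have hfacts : ∀ t, ∀ p ∈ Ct t, ‖p.1‖ = 1 ∧ 0 < p.2 ∧ p.2 ≤ δseq t ∧
      ‖(1 - p.2) • p.1‖ = 1 - p.2 ∧ dist ((1 - p.2) • p.1) p.1 = p.2 := by
    intro t p hp
    have h1 := (hCp t).1 p hp
    have hn : ‖p.1‖ = 1 := by
      have := hFs (Nat.unpair t).1 h1.1
      rwa [mem_sphere_zero_iff_norm] at this
    have hple : p.2 ≤ 1/2 := h1.2.2.trans (hδh t)
    exact ⟨hn, h1.2.1, h1.2.2, norm_shrink hn (by linarith), dist_shrink hn h1.2.1.le⟩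
  have hEball : E ⊆ ball (0:Pt n) 1 := by
    intro x hx
    obtain ⟨t, p, hp, rfl⟩ := (hmem x).1 hx
    obtain ⟨hn, hp2, hp3, hxn, hxd⟩ := hfacts t p hp
    rw [mem_ball_zero_iff, hxn]
    linarith
  -- cross-band estimate
  have hband : ∀ t t', t < t' → ∀ p ∈ Ct t, ∀ q ∈ Ct t', q.2 ≤ p.2 / 10 := by
    intro t t' htt p hp q hq
    have h1 : q.2 ≤ δseq t' := ((hCp t').1 q hq).2.2
    have h2 : δseq t' ≤ δseq (t+1) := hδmono (t+1) t' htt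
    exact h1.trans (h2.trans (hδband t p hp))
  -- separation
  have hsepmain : ∀ t p t' q, p ∈ Ct t → q ∈ Ct t' →
      dist ((1 - q.2) • q.1) ((1 - p.2) • p.1) ≤ p.2 / 2 → t = t' ∧ p = q := by
    intro t p t' q hp hq hdist
    obtain ⟨hn, hp2, hp3, hxn, hxd⟩ := hfacts t p hp
    obtain ⟨hn', hq2, hq3, hyn, hyd⟩ := hfacts t' q hq
    set x := (1 - p.2) • p.1
    set y := (1 - q.2) • q.1
    rcases lt_trichotomy t t' with h | h | h
    · exfalso
      have hqp : q.2 ≤ p.2 / 10 := hband t t' h p hp q hq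
      have : ‖y‖ - ‖x‖ ≤ dist y x := by
        have := norm_sub_norm_le y x
        rwa [← dist_eq_norm] at this
      rw [hxn, hyn] at this
      linarith
    · subst h
      refine ⟨rfl, ?_⟩
      by_contra hpq
      have hsep := (hCp t).2.1 p hp q hq hpq
      have htri : dist p.1 q.1 ≤ dist p.1 x + dist x y + dist y q.1 :=
        dist_triangle4 p.1 x y q.1
      rw [dist_comm p.1 x, hxd] at htri
      rw [hyd] at htri
      rw [dist_comm x y] at htri
      linarith
    · exfalso
      have hpq : p.2 ≤ q.2 / 10 := hband t' t h q hq p hp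
      have : ‖x‖ - ‖y‖ ≤ dist y x := by
        have := norm_sub_norm_le x y
        rwa [← dist_eq_norm, dist_comm] at this
      rw [hxn, hyn] at this
      linarith
  -- coverage / radial approximation
  have hcov : ∀ k, ∀ z ∈ F k, ∀ r : ℝ, 0 < r → ∃ x ∈ E,
      dist x z ≤ 16 * (1 - ‖x‖) ∧ 1 - ‖x‖ ≤ r := by
    intro k z hz r hr
    obtain ⟨m, hm⟩ := exists_pow_lt_of_lt_one hr (by norm_num : (1:ℝ)/2 < 1)
    set t := Nat.pair k m with htdef
    have hkt : (Nat.unpair t).1 = k := by rw [htdef, Nat.unpair_pair]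
    have hδt : δseq t ≤ r := by
      calc δseq t ≤ (1/2)^t := hδle t
        _ ≤ (1/2)^m := by
          apply pow_le_pow_of_le_one (by norm_num) (by norm_num)
          exact Nat.right_le_pair k m
        _ ≤ r := hm.le
    have hcover := (hCp t).2.2.1
    rw [hkt] at hcover
    obtain ⟨p, hp, hzp⟩ := by
      have := hcover hz
      rwa [Set.mem_iUnion₂] at this
    obtain ⟨hn, hp2, hp3, hxn, hxd⟩ := hfacts t p hp
    refine ⟨(1 - p.2) • p.1, (hmem _).2 ⟨t, p, hp, rfl⟩, ?_, ?_⟩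
    · rw [hxn]
      rw [mem_closedBall, dist_comm] at hzp
      calc dist ((1 - p.2) • p.1) z ≤ dist ((1 - p.2) • p.1) p.1 + dist p.1 z :=
            dist_triangle _ _ _
        _ ≤ p.2 + 15 * p.2 := by rw [hxd]; linarith
        _ = 16 * p.2 := by ring
        _ = 16 * (1 - (1 - p.2)) := by ring
    · rw [hxn]
      linarith [hp3.trans hδt]
  have hXrad : X ⊆ radialLimitSet E := by
    intro z hz
    obtain ⟨k, hzk⟩ := by rwa [hXF, mem_iUnion] at hz
    have hzn : ‖z‖ = 1 := by
      have := hFs k hzk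
      rwa [mem_sphere_zero_iff_norm] at this
    rw [radialLimitSet, mem_iUnion₂]
    refine ⟨16, by norm_num, hzn, fun r hr => ?_⟩
    obtain ⟨x, hxE, h1, h2⟩ := hcov k z hzk r hr
    exact ⟨x, hxE, h1, by linarith⟩
  have hXclosure : ∀ z ∈ X, z ∈ closure E := by
    intro z hz
    obtain ⟨k, hzk⟩ := by rwa [hXF, mem_iUnion] at hz
    rw [Metric.mem_closure_iff]
    intro ε hε
    obtain ⟨x, hxE, h1, h2⟩ := hcov k z hzk (ε/32) (by positivity)
    refine ⟨x, hxE, ?_⟩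
    rw [dist_comm]
    calc dist x z ≤ 16 * (1 - ‖x‖) := h1
      _ ≤ 16 * (ε/32) := by linarith
      _ < ε := by linarith
  have hSep : SeparatedSet E := by
    refine ⟨1/2, by norm_num, by norm_num, ?_⟩
    intro x hx
    obtain ⟨t, p, hp, rfl⟩ := (hmem x).1 hx
    obtain ⟨hn, hp2, hp3, hxn, hxd⟩ := hfacts t p hp
    ext y
    simp only [Set.mem_inter_iff, mem_closedBall, Set.mem_singleton_iff]
    constructor
    · rintro ⟨hyb, hyE⟩
      obtain ⟨t', q, hq, rfl⟩ := (hmem y).1 hyE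
      rw [hxn] at hyb
      obtain ⟨rfl, rfl⟩ := hsepmain t p t' q hp hq (by linarith)
      rfl
    · rintro rfl
      refine ⟨?_, hx⟩
      rw [dist_self, hxn]
      linarith
  have hWell : WellApproximated E := by
    refine ⟨1, le_rfl, ?_⟩
    intro x hx
    obtain ⟨t, p, hp, rfl⟩ := (hmem x).1 hx
    obtain ⟨hn, hp2, hp3, hxn, hxd⟩ := hfacts t p hp
    have hpX : p.1 ∈ X := hFX _ ((hCp t).1 p hp).1
    refine ⟨p.1, ⟨hXclosure p.1 hpX, ?_⟩, ?_⟩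
    · intro hpe
      have := hEball hpe
      rw [mem_ball_zero_iff, hn] at this
      exact lt_irrefl _ this
    · rw [hxd, hxn]
      linarith
  -- series bound
  have hacc : ∀ s : ℝ≥0, dimH X < (s:ℝ≥0∞) → accSeries E (s:ℝ) < ⊤ := by
    intro s hsX
    have hDs : D < (s:ℝ) := by
      have h := (ENNReal.toReal_lt_toReal hdX ENNReal.coe_ne_top).2 hsX
      rwa [ENNReal.coe_toReal] at h
    obtain ⟨T, hT⟩ := exists_nat_one_div_lt (by linarith : (0:ℝ) < (s:ℝ) - D)
    have hsT : ∀ t, T ≤ t → sexp t ≤ (s:ℝ) := by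
      intro t ht
      have hc : ((T:ℝ)+1) ≤ ((t:ℝ)+1) := by
        have := (Nat.cast_le (α := ℝ)).2 ht
        linarith
      have h1 : 1/((t:ℝ)+1) ≤ 1/((T:ℝ)+1) := one_div_le_one_div_of_le (by positivity) hc
      simp only [hsexpdef]
      linarith
    set g : (Σ t : ℕ, {p : Pt n × ℝ // p ∈ Ct t}) → ↥E := fun σ =>
      ⟨(1 - σ.2.1.2) • σ.2.1.1, (hmem _).2 ⟨σ.1, σ.2.1, σ.2.2, rfl⟩⟩ with hgdef
    have hgsurj : Function.Surjective g := by
      rintro ⟨x, hx⟩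
      obtain ⟨t, p, hp, rfl⟩ := (hmem x).1 hx
      exact ⟨⟨t, ⟨p, hp⟩⟩, rfl⟩
    have h1 : accSeries E (s:ℝ) ≤ ∑' σ : (Σ t : ℕ, {p : Pt n × ℝ // p ∈ Ct t}),
        ENNReal.ofReal ((1 - ‖((g σ : ↥E) : Pt n)‖) ^ ((s:ℝ≥0):ℝ)) := by
      rw [accSeries]
      exact ENNReal.tsum_le_tsum_comp_of_surjective hgsurj _
    have h2 : ∀ σ : (Σ t : ℕ, {p : Pt n × ℝ // p ∈ Ct t}),
        ENNReal.ofReal ((1 - ‖((g σ : ↥E) : Pt n)‖) ^ ((s:ℝ≥0):ℝ))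
          = ENNReal.ofReal ((σ.2.1.2) ^ ((s:ℝ≥0):ℝ)) := by
      rintro ⟨t, ⟨p, hp⟩⟩
      obtain ⟨hn, hp2, hp3, hxn, hxd⟩ := hfacts t p hp
      have hgv : ((g ⟨t, ⟨p, hp⟩⟩ : ↥E) : Pt n) = (1 - p.2) • p.1 := rfl
      rw [hgv, hxn, sub_sub_cancel]
    set a : ℕ → ℝ≥0∞ := fun t => ∑ p ∈ Ct t, ENNReal.ofReal (p.2 ^ ((s:ℝ≥0):ℝ)) with hadef
    have h3 : accSeries E (s:ℝ) ≤ ∑' t, a t := by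
      calc accSeries E (s:ℝ) ≤ _ := h1
        _ = ∑' σ : (Σ t : ℕ, {p : Pt n × ℝ // p ∈ Ct t}),
            ENNReal.ofReal ((σ.2.1.2) ^ ((s:ℝ≥0):ℝ)) := tsum_congr h2
        _ = ∑' (t : ℕ) (p : {p : Pt n × ℝ // p ∈ Ct t}),
            ENNReal.ofReal ((p.1.2) ^ ((s:ℝ≥0):ℝ)) :=
              ENNReal.tsum_sigma (fun t (p : {p : Pt n × ℝ // p ∈ Ct t}) =>
                ENNReal.ofReal ((p.1.2) ^ ((s:ℝ≥0):ℝ)))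
        _ = ∑' t, a t := by
            refine tsum_congr fun t => ?_
            exact Finset.tsum_subtype (Ct t) (fun p => ENNReal.ofReal (p.2 ^ ((s:ℝ≥0):ℝ)))
    have ha_ge : ∀ t, T ≤ t → a t ≤ ENNReal.ofReal ((1/2)^t) := by
      intro t ht
      rw [hadef]
      dsimp only
      rw [← ENNReal.ofReal_sum_of_nonneg (fun p hp => Real.rpow_nonneg
        ((hfacts t p hp).2.1.le) _)]
      apply ENNReal.ofReal_le_ofReal
      calc ∑ p ∈ Ct t, p.2 ^ ((s:ℝ≥0):ℝ) ≤ ∑ p ∈ Ct t, p.2 ^ (sexp t) := by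
            apply Finset.sum_le_sum
            intro p hp
            obtain ⟨hn, hp2, hp3, _, _⟩ := hfacts t p hp
            have hδ := hδh t
            exact Real.rpow_le_rpow_of_exponent_ge hp2 (by linarith) (hsT t ht)
        _ ≤ (1/2)^t := (hCp t).2.2.2
    have hsum : (∑' t, a t) < ⊤ := by
      have hb : ∀ t, a t ≤ (if t < T then a t else 0) + ENNReal.ofReal ((1/2)^t) := by
        intro t
        by_cases h : t < T
        · rw [if_pos h]
          exact le_self_add
        · rw [if_neg h, zero_add]
          exact ha_ge t (le_of_not_gt h)
      calc (∑' t, a t) ≤ ∑' t, ((if t < T then a t else 0) + ENNReal.ofReal ((1/2)^t)) :=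
            ENNReal.tsum_le_tsum hb
        _ = (∑' t, (if t < T then a t else 0)) + ∑' t, ENNReal.ofReal ((1/2)^t) :=
            ENNReal.tsum_add
        _ < ⊤ := by
            apply ENNReal.add_lt_top.2
            constructor
            · rw [tsum_eq_sum (s := Finset.range T)
                (fun b hb => if_neg (by simpa using Finset.mem_range.not.1 hb))]
              refine WithTop.sum_lt_top.2 fun i _ => ?_
              split
              · rw [hadef]
                exact WithTop.sum_lt_top.2 fun p _ => ENNReal.ofReal_lt_top
              · exact ENNReal.zero_lt_top
            · rw [← ENNReal.ofReal_tsum_of_nonneg (fun t => by positivity)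
                (summable_geometric_of_lt_one (by norm_num) (by norm_num))]
              exact ENNReal.ofReal_lt_top
    exact lt_of_le_of_lt h3 hsum
  exact ⟨E, hEball, hSep, hWell, hXrad, hacc⟩

/-- **Theorem: for a non-empty `F_σ` set `X ⊆ S^{n-1}`, `dim_H X` is the minimum of `δ(E)` over
separated, well-approximated discrete `E ⊆ 𝔻ⁿ` with `L_rad(E) ⊇ X`.** -/
theorem dimH_eq_min_critExp_Fsigma {n : ℕ} (hn : 1 ≤ n)
    (X : Set (Pt n)) (hX : X ⊆ sphere 0 1) (hXne : X.Nonempty)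
    (hFsigma : ∃ F : ℕ → Set (Pt n), (∀ k, IsClosed (F k)) ∧ X = ⋃ k, F k) :
    (∃ E : Set (Pt n), E ⊆ ball 0 1 ∧ IsDiscreteSet E ∧ SeparatedSet E ∧
        WellApproximated E ∧ X ⊆ radialLimitSet E ∧ critExp E = dimH X) ∧
      ∀ E : Set (Pt n), E ⊆ ball 0 1 → IsDiscreteSet E → SeparatedSet E →
        WellApproximated E → X ⊆ radialLimitSet E → dimH X ≤ critExp E := by
  obtain ⟨F, hFc, hXF⟩ := hFsigma
  set F' : ℕ → Set (Pt n) := fun k => F k ∩ sphere 0 1 with hF'def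
  have hF'c : ∀ k, IsClosed (F' k) := fun k => (hFc k).inter isClosed_sphere
  have hF's : ∀ k, F' k ⊆ sphere 0 1 := fun k => inter_subset_right
  have hXF' : X = ⋃ k, F' k := by
    calc X = X ∩ sphere 0 1 := (inter_eq_left.2 hX).symm
      _ = (⋃ k, F k) ∩ sphere 0 1 := by rw [← hXF]
      _ = ⋃ k, (F k ∩ sphere 0 1) := iUnion_inter _ _
  obtain ⟨E, hEb, hSep, hWell, hXrad, hacc⟩ := construction X F' hF'c hF's hXF'
  have hDisc : IsDiscreteSet E := by
    obtain ⟨c₁, hc0, hc1, hc⟩ := hSep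
    intro x hx
    have hxb := mem_ball_zero_iff.1 (hEb hx)
    exact ⟨c₁ * (1 - ‖x‖), by nlinarith, hc x hx⟩
  have heq : critExp E = dimH X := by
    apply le_antisymm
    · by_contra h
      push_neg at h
      obtain ⟨r, hr1, hr2⟩ := ENNReal.lt_iff_exists_nnreal_btwn.1 h
      have hle : critExp E ≤ (r:ℝ≥0∞) := by
        rw [critExp]
        exact iInf_le_of_le r (iInf_le_of_le (hacc r hr1) le_rfl)
      exact absurd (hle.trans_lt hr2) (lt_irrefl _)
    · exact dimH_le_critExp X E hXne hEb hXrad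
  exact ⟨⟨E, hEb, hDisc, hSep, hWell, hXrad, heq⟩,
    fun E' hb _ _ _ hr => dimH_le_critExp X E' hXne hb hr⟩

end
end

section
/- Let n ≥ 1, let 0 < β ≤ 1 ≤ α, and let E ⊆ 𝔻ⁿ be a discrete set that is α-separated and β-well-approximated. Then the upper box dimension of L(E) is at least δ(E) − 2(nα − (n−1)β − 1). -/
open Metric Set Filter
open scoped ENNReal NNReal
open MeasureTheory

noncomputable section

lemma nontrivial_Pt {n : ℕ} (hn : 1 ≤ n) : Nontrivial (Pt n) := by
  refine Nontrivial.mk ⟨EuclideanSpace.single ⟨0, by omega⟩ (1:ℝ), 0, fun hc => ?_⟩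
  have := congrArg (fun v : Pt n => v ⟨0, by omega⟩) hc
  simp [EuclideanSpace.single_apply] at this

lemma card_mul_le_volume {n : ℕ} (S : Finset (Pt n)) {r : ℝ} (hr : 0 < r)
    {T : Set (Pt n)} (hT : MeasurableSet T)
    (hsub : ∀ x ∈ S, closedBall x r ⊆ T)
    (hsep : (↑S : Set (Pt n)).Pairwise fun a b => 2*r < dist a b) :
    (S.card : ℝ≥0∞) * volume (closedBall (0 : Pt n) r) ≤ volume T := by
  have hdisj : (↑S : Set (Pt n)).PairwiseDisjoint fun x => closedBall x r := by
    intro a ha b hb hab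
    exact closedBall_disjoint_closedBall (by linarith [hsep ha hb hab])
  have h1 : volume (⋃ x ∈ S, closedBall x r) = ∑ x ∈ S, volume (closedBall x r) := by
    exact measure_biUnion_finset hdisj fun x _ => measurableSet_closedBall
  have h2 : ∀ x : Pt n, volume (closedBall x r) = volume (closedBall (0:Pt n) r) := by
    intro x
    rw [Measure.addHaar_closedBall volume x hr.le, Measure.addHaar_closedBall volume 0 hr.le]
  calc (S.card : ℝ≥0∞) * volume (closedBall (0 : Pt n) r)
      = ∑ x ∈ S, volume (closedBall x r) := by
        rw [Finset.sum_congr rfl fun x _ => h2 x, Finset.sum_const, nsmul_eq_mul]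
    _ = volume (⋃ x ∈ S, closedBall x r) := h1.symm
    _ ≤ volume T := measure_mono (iUnion₂_subset hsub)

lemma volume_closedBall_Pt {n : ℕ} (r : ℝ) (hr : 0 ≤ r) :
    volume (closedBall (0 : Pt n) r)
      = ENNReal.ofReal (r ^ n) * volume (ball (0 : Pt n) 1) := by
  rw [Measure.addHaar_closedBall volume 0 hr, finrank_euclideanSpace_fin]

lemma card_sep_ball {n : ℕ} (S : Finset (Pt n)) {r R : ℝ} (hr : 0 < r)
    (hR : 0 ≤ R) {w : Pt n} (hS : ∀ x ∈ S, x ∈ closedBall w R)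
    (hsep : (↑S : Set (Pt n)).Pairwise fun a b => 2*r < dist a b) :
    (S.card : ℝ) * r ^ n ≤ (R + r) ^ n := by
  have hvol : (S.card : ℝ≥0∞) * volume (closedBall (0 : Pt n) r)
      ≤ volume (closedBall w (R + r)) := by
    refine card_mul_le_volume S hr measurableSet_closedBall (fun x hx => ?_) hsep
    intro y hy
    have h1 : dist x w ≤ R := hS x hx
    have h2 : dist y x ≤ r := hy
    exact mem_closedBall.2 (by calc dist y w ≤ dist y x + dist x w := dist_triangle _ _ _
      _ ≤ R + r := by linarith)
  rw [volume_closedBall_Pt r hr.le] at hvol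
  rw [Measure.addHaar_closedBall volume w (by linarith), finrank_euclideanSpace_fin] at hvol
  have hb0 : volume (ball (0:Pt n) 1) ≠ 0 := by
    have := measure_ball_pos volume (0:Pt n) one_pos; exact this.ne'
  have hbt : volume (ball (0:Pt n) 1) ≠ ⊤ := measure_ball_lt_top.ne
  rw [← mul_assoc, ENNReal.mul_le_mul_iff_left hb0 hbt] at hvol
  have key : ENNReal.ofReal ((S.card : ℝ) * r ^ n) ≤ ENNReal.ofReal ((R + r) ^ n) := by
    calc ENNReal.ofReal ((S.card : ℝ) * r ^ n)
        = (S.card : ℝ≥0∞) * ENNReal.ofReal (r ^ n) := by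
          rw [ENNReal.ofReal_mul (by positivity), ENNReal.ofReal_natCast]
      _ ≤ ENNReal.ofReal ((R + r) ^ n) := hvol
  exact (ENNReal.ofReal_le_ofReal_iff (by positivity)).1 key

lemma card_sep_annulus {n : ℕ} (hn : 1 ≤ n) (S : Finset (Pt n)) {r a b : ℝ} (hr : 0 < r)
    (hra : r ≤ a) (hab : a ≤ b)
    (hS : ∀ x ∈ S, a ≤ ‖x‖ ∧ ‖x‖ ≤ b)
    (hsep : (↑S : Set (Pt n)).Pairwise fun u v => 2*r < dist u v) :
    (S.card : ℝ) * r ^ n + (a - r) ^ n ≤ (b + r) ^ n := by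
  haveI : Nontrivial (Pt n) := by
    refine Nontrivial.mk ⟨EuclideanSpace.single ⟨0, by omega⟩ (1:ℝ), 0, fun hc => ?_⟩
    have := congrArg (fun v : Pt n => v ⟨0, by omega⟩) hc
    simp [EuclideanSpace.single_apply] at this
  have hdisj : (↑S : Set (Pt n)).PairwiseDisjoint fun x => closedBall x r := by
    intro u hu v hv huv
    exact closedBall_disjoint_closedBall (by linarith [hsep hu hv huv])
  set U : Set (Pt n) := ⋃ x ∈ S, closedBall x r with hU
  have h1 : volume U = (S.card : ℝ≥0∞) * volume (closedBall (0:Pt n) r) := by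
    rw [hU, measure_biUnion_finset hdisj fun x _ => measurableSet_closedBall]
    have heq : ∀ x ∈ S, volume (closedBall x r) = volume (closedBall (0:Pt n) r) := fun x _ => by
      rw [Measure.addHaar_closedBall volume x hr.le, Measure.addHaar_closedBall volume (0:Pt n) hr.le]
    rw [Finset.sum_congr rfl heq, Finset.sum_const, nsmul_eq_mul]
  have hUdisj : Disjoint U (ball (0 : Pt n) (a - r)) := by
    rw [hU, disjoint_iUnion₂_left]
    intro x hx
    rw [Set.disjoint_left]
    intro y hy hy'
    have h2 : ‖y‖ < a - r := by simpa [mem_ball_zero_iff] using hy'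
    have h3 : dist y x ≤ r := hy
    have h4 : a ≤ ‖x‖ := (hS x hx).1
    have : ‖x‖ - ‖y‖ ≤ dist y x := by
      rw [dist_comm, dist_eq_norm]
      exact norm_sub_norm_le x y
    linarith
  have hsub : U ∪ ball (0 : Pt n) (a - r) ⊆ closedBall (0 : Pt n) (b + r) := by
    rintro y (hy | hy)
    · rw [hU] at hy
      obtain ⟨x, hx, hyx⟩ := by simpa using hy
      have h3 : dist y x ≤ r := hyx
      have h4 : ‖x‖ ≤ b := (hS x hx).2
      rw [mem_closedBall_zero_iff]
      have : ‖y‖ - ‖x‖ ≤ dist y x := by rw [dist_eq_norm]; exact norm_sub_norm_le y x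
      linarith
    · exact ball_subset_closedBall.trans (closedBall_subset_closedBall (by linarith)) hy
  have hmeas : volume U + volume (ball (0 : Pt n) (a - r)) ≤ volume (closedBall (0:Pt n) (b+r)) := by
    rw [← measure_union hUdisj measurableSet_ball]
    exact measure_mono hsub
  rw [h1, Measure.addHaar_closedBall volume _ hr.le,
      Measure.addHaar_ball volume _ (by linarith : (0:ℝ) ≤ a - r),
      Measure.addHaar_closedBall volume _ (by linarith : (0:ℝ) ≤ b + r),
      finrank_euclideanSpace_fin] at hmeas
  set κ := volume (ball (0 : Pt n) 1) with hκ
  have hκ0 : κ ≠ 0 := (measure_ball_pos volume (0:Pt n) one_pos).ne'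
  have hκt : κ ≠ ⊤ := measure_ball_lt_top.ne
  have hmeas2 : (ENNReal.ofReal ((S.card:ℝ) * r ^ n) + ENNReal.ofReal ((a-r)^n)) * κ
      ≤ ENNReal.ofReal ((b+r)^n) * κ := by
    rw [add_mul]
    calc ENNReal.ofReal ((S.card:ℝ) * r ^ n) * κ + ENNReal.ofReal ((a-r)^n) * κ
        = (S.card : ℝ≥0∞) * (ENNReal.ofReal (r ^ n) * κ) + ENNReal.ofReal ((a-r)^n) * κ := by
          rw [ENNReal.ofReal_mul (by positivity), ENNReal.ofReal_natCast, mul_assoc]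
      _ ≤ ENNReal.ofReal ((b+r)^n) * κ := hmeas
  rw [ENNReal.mul_le_mul_iff_left hκ0 hκt] at hmeas2
  rw [← ENNReal.ofReal_add (by positivity) (pow_nonneg (by linarith) n)] at hmeas2
  exact (ENNReal.ofReal_le_ofReal_iff (pow_nonneg (by linarith) n)).1 hmeas2

lemma exists_maximal_separated {n : ℕ} (Z₀ : Finset (Pt n)) {ρ : ℝ} (hρ : 0 ≤ ρ) :
    ∃ Z : Finset (Pt n), Z ⊆ Z₀ ∧
      ((↑Z : Set (Pt n)).Pairwise fun u v => ρ < dist u v) ∧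
      ∀ z ∈ Z₀, ∃ w ∈ Z, dist z w ≤ ρ := by
  classical
  set P : Finset (Pt n) → Prop :=
    fun Z => Z ⊆ Z₀ ∧ ((↑Z : Set (Pt n)).Pairwise fun u v => ρ < dist u v) with hP
  have hne : (Z₀.powerset.filter P).Nonempty := by
    refine ⟨∅, Finset.mem_filter.2 ⟨Finset.mem_powerset.2 (Finset.empty_subset _), ?_⟩⟩
    exact ⟨Finset.empty_subset _, by simp⟩
  obtain ⟨Z, hZmem, hZmax⟩ : ∃ Z ∈ Z₀.powerset.filter P, ∀ x ∈ Z₀.powerset.filter P, ¬ Z < x := by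
    obtain ⟨Z, hZ⟩ := Finset.exists_maximal hne
    exact ⟨Z, hZ.1, fun x hx => hZ.not_gt hx⟩
  obtain ⟨-, hZsub, hZsep⟩ : _ ∧ P Z := by
    have := Finset.mem_filter.1 hZmem
    exact ⟨Finset.mem_powerset.1 this.1, this.2⟩
  refine ⟨Z, hZsub, hZsep, fun z hz => ?_⟩
  by_contra hcon
  push_neg at hcon
  have hzZ : z ∉ Z := fun h => by
    have := hcon z h
    simp at this
    linarith
  have hins : P (insert z Z) := by
    constructor
    · exact Finset.insert_subset hz hZsub
    · rw [Finset.coe_insert]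
      refine Set.Pairwise.insert hZsep ?_
      intro w hw hwz
      have h1 := hcon w hw
      refine ⟨h1, ?_⟩
      rw [dist_comm]; exact h1
  have hmem2 : insert z Z ∈ Z₀.powerset.filter P := by
    refine Finset.mem_filter.2 ⟨Finset.mem_powerset.2 hins.1, hins⟩
  exact hZmax _ hmem2 (Finset.ssubset_insert hzZ)

/-- Disjoint closed balls have centres at distance `> 2δ`. -/
lemma dist_gt_of_disjoint {n : ℕ} {x y : Pt n} {δ : ℝ} (hδ : 0 ≤ δ)
    (h : Disjoint (closedBall x δ) (closedBall y δ)) : 2 * δ < dist x y := by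
  by_contra hcon
  push_neg at hcon
  have h2 : ‖(2:ℝ)‖ = 2 := by norm_num
  have hm : midpoint ℝ x y ∈ closedBall x δ ∩ closedBall y δ := by
    constructor
    · rw [mem_closedBall, dist_midpoint_left, h2]
      rw [inv_mul_le_iff₀ (by norm_num : (0:ℝ) < 2)]
      linarith
    · rw [mem_closedBall, dist_midpoint_right, h2]
      rw [inv_mul_le_iff₀ (by norm_num : (0:ℝ) < 2)]
      linarith
  exact Set.disjoint_left.1 h hm.1 hm.2

lemma le_packingNumber {n : ℕ} (F : Set (Pt n)) (δ : ℝ) (Z : Finset (Pt n))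
    (hsub : ↑Z ⊆ F)
    (hdisj : (Z : Set (Pt n)).PairwiseDisjoint fun x => closedBall x δ) :
    (Z.card : ℕ∞) ≤ packingNumber F δ := by
  exact le_iSup_of_le Z (le_iSup_of_le hsub (le_iSup_of_le hdisj le_rfl))

lemma packingNumber_le {n : ℕ} {F : Set (Pt n)} (hF : F ⊆ closedBall 0 1) {δ : ℝ}
    (hδ : 0 < δ) : packingNumber F δ ≤ (⌈((1 + δ)/δ) ^ n⌉₊ : ℕ∞) := by
  refine iSup_le fun Z => iSup_le fun hsub => iSup_le fun hdisj => ?_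
  have hsep : (↑Z : Set (Pt n)).Pairwise fun a b => 2*δ < dist a b := by
    intro a ha b hb hab
    exact dist_gt_of_disjoint hδ.le (hdisj ha hb hab)
  have h1 : (Z.card : ℝ) * δ ^ n ≤ (1 + δ) ^ n :=
    card_sep_ball Z hδ zero_le_one (fun x hx => hF (hsub hx)) hsep
  have h2 : (Z.card : ℝ) ≤ ((1 + δ)/δ) ^ n := by
    rw [div_pow, le_div_iff₀ (by positivity)]
    exact h1
  have h3 : Z.card ≤ ⌈((1 + δ)/δ) ^ n⌉₊ := by
    exact_mod_cast h2.trans (Nat.le_ceil _)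
  exact_mod_cast h3

lemma toNat_packingNumber_ge {n : ℕ} {F : Set (Pt n)} (hF : F ⊆ closedBall 0 1) {δ : ℝ}
    (hδ : 0 < δ) {N : ℕ} (hN : (N : ℕ∞) ≤ packingNumber F δ) :
    N ≤ (packingNumber F δ).toNat := by
  have hne : packingNumber F δ ≠ ⊤ :=
    ne_top_of_le_ne_top (by simp) (packingNumber_le hF hδ)
  rw [← ENat.coe_toNat hne] at hN
  exact_mod_cast hN

def wk (k : ℕ) : ℝ := ((2:ℝ)^k)⁻¹

lemma wk_pos (k : ℕ) : 0 < wk k := by rw [wk]; positivity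

lemma wk_le_one (k : ℕ) : wk k ≤ 1 := by
  rw [wk]; rw [inv_le_one_iff₀]; right; exact one_le_pow₀ (by norm_num)

lemma wk_succ (k : ℕ) : wk (k+1) = wk k / 2 := by
  rw [wk, wk, pow_succ]; field_simp

lemma wk_anti {k l : ℕ} (h : k ≤ l) : wk l ≤ wk k := by
  rw [wk, wk]
  exact inv_anti₀ (by positivity) (pow_le_pow_right₀ (by norm_num) h)

lemma wk_eq_rpow (k : ℕ) : wk k = (2:ℝ) ^ (-(k:ℝ)) := by
  rw [wk, ← Real.rpow_natCast 2 k, ← Real.rpow_neg (by norm_num)]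

lemma wk_rpow (k : ℕ) (x : ℝ) : wk k ^ x = (2:ℝ) ^ (-(k:ℝ)*x) := by
  rw [wk_eq_rpow, ← Real.rpow_mul (by norm_num)]

lemma wk_rpow_le_one (k : ℕ) {x : ℝ} (hx : 0 ≤ x) : wk k ^ x ≤ 1 :=
  Real.rpow_le_one (wk_pos k).le (wk_le_one k) hx

def EkSet {n : ℕ} (E : Set (Pt n)) (k : ℕ) : Set (Pt n) :=
  {x ∈ E | wk (k+1) < 1 - ‖x‖ ∧ 1 - ‖x‖ ≤ wk k}

lemma mem_Ek_exists {n : ℕ} {E : Set (Pt n)} (hE : E ⊆ ball 0 1) {x : Pt n} (hx : x ∈ E) :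
    ∃ k, x ∈ EkSet E k := by
  have h1 : ‖x‖ < 1 := by simpa [mem_ball_zero_iff] using hE hx
  have h0 : 0 < 1 - ‖x‖ := by linarith
  have hex : ∃ m, wk m < 1 - ‖x‖ := by
    obtain ⟨m, hm⟩ := exists_pow_lt_of_lt_one h0 (by norm_num : (2:ℝ)⁻¹ < 1)
    exact ⟨m, by rw [wk, ← inv_pow]; exact hm⟩
  classical
  have hmdef : Nat.find hex = Nat.find hex := rfl
  generalize hgen : Nat.find hex = m at *
  have hm : wk m < 1 - ‖x‖ := hgen ▸ Nat.find_spec hex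
  have hm0 : m ≠ 0 := by
    intro h
    rw [h] at hm
    have : wk 0 = 1 := by norm_num [wk]
    have hx0 : 0 ≤ ‖x‖ := norm_nonneg x
    rw [this] at hm; linarith
  obtain ⟨k, rfl⟩ : ∃ k, m = k + 1 := ⟨m - 1, by omega⟩
  refine ⟨k, hx, hm, ?_⟩
  have := Nat.find_min hex (m := k) (by omega)
  linarith

lemma Ek_subset {n : ℕ} (E : Set (Pt n)) (k : ℕ) : EkSet E k ⊆ E := fun _ h => h.1

def rks (c₁ α : ℝ) (k : ℕ) : ℝ := c₁ * wk (k+1) ^ α / 2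

section MainAux
variable {n : ℕ} {E : Set (Pt n)} {c₁ c₂ α β : ℝ}

lemma rks_pos (hc₁ : 0 < c₁) (hα : 1 ≤ α) (k : ℕ) : 0 < rks c₁ α k := by
  have := Real.rpow_pos_of_pos (wk_pos (k+1)) α
  rw [rks]; positivity

lemma rks_le_one (hc₁ : 0 < c₁) (hc₁' : c₁ ≤ 1) (hα : 1 ≤ α) (k : ℕ) : rks c₁ α k ≤ 1 := by
  have h1 := wk_rpow_le_one (k+1) (by linarith : (0:ℝ) ≤ α)
  have h2 : 0 < wk (k+1) ^ α := Real.rpow_pos_of_pos (wk_pos (k+1)) α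
  rw [rks]
  nlinarith

lemma Ek_pairwise_sep (hα : 1 ≤ α)
    (hsep' : ∀ x ∈ E, ∀ y ∈ E, y ≠ x → c₁ * (1 - ‖x‖) ^ α < dist y x) (k : ℕ)
    (hc₁ : 0 < c₁) :
    (EkSet E k).Pairwise fun u v => 2 * rks c₁ α k < dist u v := by
  intro u hu v hv huv
  have h1 : c₁ * (1 - ‖v‖) ^ α < dist u v := hsep' v hv.1 u hu.1 huv
  have h2 : wk (k+1) ^ α ≤ (1 - ‖v‖) ^ α :=
    Real.rpow_le_rpow (wk_pos (k+1)).le hv.2.1.le (by linarith)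
  have : 2 * rks c₁ α k = c₁ * wk (k+1) ^ α := by rw [rks]; ring
  rw [this]
  calc c₁ * wk (k+1) ^ α ≤ c₁ * (1 - ‖v‖) ^ α := by nlinarith
    _ < dist u v := h1

lemma Ek_subset_closedBall (hE : E ⊆ ball 0 1) (k : ℕ) :
    EkSet E k ⊆ closedBall (0 : Pt n) 1 :=
  fun x hx => ball_subset_closedBall (hE hx.1)

lemma Ek_finset_card (hn : 1 ≤ n) (hE : E ⊆ ball 0 1) (hc₁ : 0 < c₁) (hc₁' : c₁ ≤ 1)
    (hα : 1 ≤ α)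
    (hsep' : ∀ x ∈ E, ∀ y ∈ E, y ≠ x → c₁ * (1 - ‖x‖) ^ α < dist y x) (k : ℕ)
    (S : Finset (Pt n)) (hS : ↑S ⊆ EkSet E k) :
    (S.card : ℝ) * rks c₁ α k ^ n ≤ 2 ^ n := by
  have h1 := card_sep_ball S (rks_pos hc₁ hα k) zero_le_one
    (w := (0:Pt n)) (fun x hx => Ek_subset_closedBall hE k (hS hx))
    (((Ek_pairwise_sep hα hsep' k hc₁).mono hS))
  calc (S.card : ℝ) * rks c₁ α k ^ n ≤ (1 + rks c₁ α k) ^ n := h1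
    _ ≤ 2 ^ n := by
        have h0 := rks_pos hc₁ hα k
        apply pow_le_pow_left₀ (by linarith)
        linarith [rks_le_one hc₁ hc₁' hα k]

lemma Ek_finite (hn : 1 ≤ n) (hE : E ⊆ ball 0 1) (hc₁ : 0 < c₁) (hc₁' : c₁ ≤ 1)
    (hα : 1 ≤ α)
    (hsep' : ∀ x ∈ E, ∀ y ∈ E, y ≠ x → c₁ * (1 - ‖x‖) ^ α < dist y x) (k : ℕ) :
    (EkSet E k).Finite := by
  by_contra hcon
  have hcon' : (EkSet E k).Infinite := hcon
  set B : ℝ := 2 ^ n / rks c₁ α k ^ n with hB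
  obtain ⟨S, hSsub, hScard⟩ := hcon'.exists_subset_card_eq (⌈B⌉₊ + 1)
  have h1 := Ek_finset_card hn hE hc₁ hc₁' hα hsep' k S hSsub
  have hrpos : (0:ℝ) < rks c₁ α k ^ n := pow_pos (rks_pos hc₁ hα k) n
  have h2 : (S.card : ℝ) ≤ B := by rw [hB, le_div_iff₀ hrpos]; exact h1
  have h3 : (S.card : ℝ) ≤ (⌈B⌉₊ : ℝ) := h2.trans (Nat.le_ceil B)
  have h4 : S.card ≤ ⌈B⌉₊ := by exact_mod_cast h3
  omega

lemma Ek_ncard (hn : 1 ≤ n) (hE : E ⊆ ball 0 1) (hc₁ : 0 < c₁) (hc₁' : c₁ ≤ 1)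
    (hα : 1 ≤ α)
    (hsep' : ∀ x ∈ E, ∀ y ∈ E, y ≠ x → c₁ * (1 - ‖x‖) ^ α < dist y x) (k : ℕ) :
    ((EkSet E k).ncard : ℝ) * rks c₁ α k ^ n ≤ 2 ^ n := by
  have hfin := Ek_finite hn hE hc₁ hc₁' hα hsep' k
  have := Ek_finset_card hn hE hc₁ hc₁' hα hsep' k hfin.toFinset (by simp)
  rwa [Set.ncard_eq_toFinset_card _ hfin]

end MainAux

lemma accSeries_lt_top_of_counts {n : ℕ} {E : Set (Pt n)} (hE : E ⊆ ball 0 1)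
    (hfin : ∀ k, (EkSet E k).Finite) {s σ : ℝ} (hσ0 : 0 ≤ σ) (hσs : σ < s) (K : ℕ)
    (hcnt : ∀ k, K ≤ k → ((EkSet E k).ncard : ℝ) ≤ (2:ℝ) ^ ((k:ℝ) * σ)) :
    accSeries E s < ⊤ := by
  classical
  have hs0 : 0 < s := lt_of_le_of_lt hσ0 hσs
  -- inject E into the sigma type
  set g : (Σ k : ℕ, ↥(EkSet E k)) → ℝ≥0∞ :=
    fun p => ENNReal.ofReal ((1 - ‖(p.2 : Pt n)‖) ^ s) with hg
  have hmem : ∀ x : ↥E, ∃ k, (x : Pt n) ∈ EkSet E k := fun x => mem_Ek_exists hE x.2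
  set j : ↥E → (Σ k : ℕ, ↥(EkSet E k)) :=
    fun x => ⟨(hmem x).choose, ⟨(x : Pt n), (hmem x).choose_spec⟩⟩ with hj
  have hjinj : Function.Injective j := by
    intro x y hxy
    have : ((j x).2 : Pt n) = ((j y).2 : Pt n) := by rw [hxy]
    exact Subtype.ext this
  have h1 : accSeries E s ≤ ∑' p : (Σ k : ℕ, ↥(EkSet E k)), g p := by
    have := ENNReal.tsum_comp_le_tsum_of_injective hjinj g
    exact this
  -- inner sums
  set F : ℕ → ℝ≥0∞ := fun k => ∑' x : ↥(EkSet E k), ENNReal.ofReal ((1 - ‖(x : Pt n)‖) ^ s)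
    with hF
  have h2 : ∑' p : (Σ k : ℕ, ↥(EkSet E k)), g p = ∑' k, F k := by
    exact ENNReal.tsum_sigma fun k (x : ↥(EkSet E k)) => ENNReal.ofReal ((1 - ‖(x : Pt n)‖) ^ s)
  have hFbound : ∀ k, F k ≤ ((EkSet E k).ncard : ℝ≥0∞) * ENNReal.ofReal (wk k ^ s) := by
    intro k
    haveI := (hfin k).fintype
    rw [hF]
    simp only
    rw [tsum_fintype]
    have hterm : ∀ x : ↥(EkSet E k), ENNReal.ofReal ((1 - ‖(x : Pt n)‖) ^ s)
        ≤ ENNReal.ofReal (wk k ^ s) := by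
      intro x
      apply ENNReal.ofReal_le_ofReal
      apply Real.rpow_le_rpow _ x.2.2.2 hs0.le
      have := x.2.2.1; linarith [wk_pos (k+1)]
    calc ∑ x : ↥(EkSet E k), ENNReal.ofReal ((1 - ‖(x : Pt n)‖) ^ s)
        ≤ Finset.univ.card • ENNReal.ofReal (wk k ^ s) :=
          Finset.sum_le_card_nsmul _ _ _ (fun x _ => hterm x)
      _ = ((EkSet E k).ncard : ℝ≥0∞) * ENNReal.ofReal (wk k ^ s) := by
          rw [nsmul_eq_mul, Finset.card_univ, ← Nat.card_coe_set_eq, Nat.card_eq_fintype_card]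
  set q : ℝ≥0∞ := ENNReal.ofReal ((2:ℝ) ^ (σ - s)) with hq
  have hqlt : q < 1 := by
    rw [hq]
    exact ENNReal.ofReal_lt_one.2
      (Real.rpow_lt_one_of_one_lt_of_neg (by norm_num) (by linarith))
  have hFtail : ∀ k, K ≤ k → F k ≤ q ^ k := by
    intro k hk
    refine (hFbound k).trans ?_
    have hc := hcnt k hk
    have hncast : ((EkSet E k).ncard : ℝ≥0∞) ≤ ENNReal.ofReal ((2:ℝ) ^ ((k:ℝ) * σ)) := by
      rw [← ENNReal.ofReal_natCast]
      exact ENNReal.ofReal_le_ofReal hc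
    calc ((EkSet E k).ncard : ℝ≥0∞) * ENNReal.ofReal (wk k ^ s)
        ≤ ENNReal.ofReal ((2:ℝ) ^ ((k:ℝ) * σ)) * ENNReal.ofReal (wk k ^ s) :=
          mul_le_mul_left hncast _
      _ = q ^ k := by
          rw [wk_rpow, ← ENNReal.ofReal_mul (by positivity), ← Real.rpow_add (by norm_num)]
          rw [hq, ← ENNReal.ofReal_pow (by positivity), ← Real.rpow_natCast ((2:ℝ)^(σ-s)) k,
            ← Real.rpow_mul (by norm_num)]
          ring_nf
  have hsplit : ∀ k, F k ≤ (if k < K then F k else 0) + q ^ k := by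
    intro k
    by_cases h : k < K
    · simp [h]
    · simp only [h, if_false, zero_add]
      exact hFtail k (by omega)
  have h3 : ∑' k, F k ≤ ∑ k ∈ Finset.range K, F k + (1 - q)⁻¹ := by
    calc ∑' k, F k ≤ ∑' k, ((if k < K then F k else 0) + q ^ k) :=
          ENNReal.tsum_le_tsum hsplit
      _ = (∑' k, (if k < K then F k else 0)) + ∑' k, q ^ k := ENNReal.tsum_add
      _ = ∑ k ∈ Finset.range K, F k + (1 - q)⁻¹ := by
          rw [ENNReal.tsum_geometric]
          congr 1
          rw [tsum_eq_sum (s := Finset.range K) (fun b hb => by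
            simp [Finset.mem_range] at hb; simp [hb])]
          exact Finset.sum_congr rfl fun k hk => by
            simp [Finset.mem_range.1 hk]
  have hFfin : ∀ k, F k < ⊤ := by
    intro k
    refine lt_of_le_of_lt (hFbound k) ?_
    exact ENNReal.mul_lt_top (by simp) ENNReal.ofReal_lt_top
  refine lt_of_le_of_lt (h1.trans (h2.le.trans h3)) ?_
  apply ENNReal.add_lt_top.2
  constructor
  · exact ENNReal.sum_lt_top.2 fun k _ => hFfin k
  · rw [ENNReal.inv_lt_top]
    exact tsub_pos_of_lt hqlt

/-- Key per-scale counting lemma. -/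
lemma key_count {n : ℕ} {E : Set (Pt n)} {c₁ c₂ α β : ℝ}
    (hE : E ⊆ ball 0 1) (hc₁ : 0 < c₁) (hc₁' : c₁ ≤ 1) (hc₂ : 1 ≤ c₂)
    (hβ : 0 < β) (hβ1 : β ≤ 1) (hα : 1 ≤ α)
    (hsep' : ∀ x ∈ E, ∀ y ∈ E, y ≠ x → c₁ * (1 - ‖x‖) ^ α < dist y x)
    (hwa' : ∀ x ∈ E, ∃ z ∈ limitSet E, dist x z ≤ c₂ * (1 - ‖x‖) ^ β)
    (k : ℕ) (hfin : (EkSet E k).Finite) :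
    ∃ N : ℕ, (N : ℕ∞) ≤ packingNumber (limitSet E) (c₂ * wk k ^ β) ∧
      ((EkSet E k).ncard : ℝ) ≤ (N : ℝ) * (4 * (c₂ * wk k ^ β) / rks c₁ α k) ^ n := by
  classical
  set δ0 : ℝ := c₂ * wk k ^ β with hδ0
  have hwkpow : (0:ℝ) < wk k ^ β := Real.rpow_pos_of_pos (wk_pos k) β
  have hδ0pos : 0 < δ0 := by rw [hδ0]; positivity
  have hrk := rks_pos hc₁ hα k
  have hrkδ0 : rks c₁ α k ≤ δ0 := by
    have h1 : wk (k+1) ^ α ≤ wk k ^ α :=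
      Real.rpow_le_rpow (wk_pos (k+1)).le (wk_anti (by omega)) (by linarith)
    have h2 : wk k ^ α ≤ wk k ^ β :=
      Real.rpow_le_rpow_of_exponent_ge (wk_pos k) (wk_le_one k) (by linarith)
    rw [rks, hδ0]
    nlinarith [Real.rpow_pos_of_pos (wk_pos (k+1)) α]
  -- the choice function
  have hzf : ∀ x : Pt n, ∃ z : Pt n, x ∈ E → (z ∈ limitSet E ∧ dist x z ≤ c₂ * (1 - ‖x‖) ^ β) := by
    intro x
    by_cases hx : x ∈ E
    · obtain ⟨z, hz1, hz2⟩ := hwa' x hx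
      exact ⟨z, fun _ => ⟨hz1, hz2⟩⟩
    · exact ⟨x, fun h => absurd h hx⟩
  choose zf hzf' using hzf
  have hzfd : ∀ x ∈ EkSet E k, dist x (zf x) ≤ δ0 := by
    intro x hx
    have h1 := (hzf' x hx.1).2
    have h2 : (1 - ‖x‖) ^ β ≤ wk k ^ β :=
      Real.rpow_le_rpow (by linarith [hx.2.1, wk_pos (k+1)]) hx.2.2 hβ.le
    rw [hδ0]; nlinarith
  set Ffin := hfin.toFinset with hFfin
  set Z₀ := Ffin.image zf with hZ₀
  obtain ⟨Z, hZsub, hZsep, hZcov⟩ := exists_maximal_separated Z₀ (by positivity : (0:ℝ) ≤ 2*δ0)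
  refine ⟨Z.card, ?_, ?_⟩
  · apply le_packingNumber
    · intro w hw
      obtain ⟨x, hx, rfl⟩ := Finset.mem_image.1 (hZsub hw)
      exact (hzf' x ((hfin.mem_toFinset.1 hx)).1).1
    · intro u hu v hv huv
      exact closedBall_disjoint_closedBall (by linarith [hZsep hu hv huv])
  · -- counting
    have hcover : Ffin ⊆ Z.biUnion fun w => Ffin.filter fun x => dist (zf x) w ≤ 2*δ0 := by
      intro x hx
      obtain ⟨w, hw, hdw⟩ := hZcov (zf x) (Finset.mem_image_of_mem zf hx)
      exact Finset.mem_biUnion.2 ⟨w, hw, Finset.mem_filter.2 ⟨hx, hdw⟩⟩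
    have hcluster : ∀ w ∈ Z, ((Ffin.filter fun x => dist (zf x) w ≤ 2*δ0).card : ℝ)
        ≤ (4 * δ0 / rks c₁ α k) ^ n := by
      intro w hw
      set S := Ffin.filter fun x => dist (zf x) w ≤ 2*δ0 with hS
      have hSsub : ↑S ⊆ EkSet E k := by
        intro x hx
        exact hfin.mem_toFinset.1 (Finset.mem_filter.1 hx).1
      have hSball : ∀ x ∈ S, x ∈ closedBall w (3*δ0) := by
        intro x hx
        have h1 := (Finset.mem_filter.1 hx).2
        have h2 := hzfd x (hSsub hx)
        rw [mem_closedBall]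
        calc dist x w ≤ dist x (zf x) + dist (zf x) w := dist_triangle _ _ _
          _ ≤ 3*δ0 := by linarith
      have h1 := card_sep_ball S hrk (by positivity : (0:ℝ) ≤ 3*δ0) hSball
        ((Ek_pairwise_sep hα hsep' k hc₁).mono hSsub)
      have h2 : (3*δ0 + rks c₁ α k) ^ n ≤ (4*δ0) ^ n := by
        apply pow_le_pow_left₀ (by positivity)
        linarith
      rw [div_pow, le_div_iff₀ (by positivity)]
      exact h1.trans (h2.trans (le_of_eq rfl))
    have hcard : (Ffin.card : ℝ) ≤ (Z.card : ℝ) * (4 * δ0 / rks c₁ α k) ^ n := by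
      have h1 : Ffin.card ≤ ∑ w ∈ Z, (Ffin.filter fun x => dist (zf x) w ≤ 2*δ0).card :=
        le_trans (Finset.card_le_card hcover) (Finset.card_biUnion_le)
      have h2 : (Ffin.card : ℝ) ≤ ∑ w ∈ Z, ((Ffin.filter fun x => dist (zf x) w ≤ 2*δ0).card : ℝ) := by
        exact_mod_cast h1
      refine h2.trans ?_
      calc ∑ w ∈ Z, ((Ffin.filter fun x => dist (zf x) w ≤ 2*δ0).card : ℝ)
          ≤ Z.card • ((4 * δ0 / rks c₁ α k) ^ n) := Finset.sum_le_card_nsmul _ _ _ hcluster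
        _ = (Z.card : ℝ) * (4 * δ0 / rks c₁ α k) ^ n := by rw [nsmul_eq_mul]
    rw [Set.ncard_eq_toFinset_card _ hfin]
    exact hcard

lemma limitSet_subset_closedBall {n : ℕ} {E : Set (Pt n)} (hE : E ⊆ ball 0 1) :
    limitSet E ⊆ closedBall (0 : Pt n) 1 := by
  intro z hz
  have h1 : closure E ⊆ closedBall (0:Pt n) 1 :=
    closure_minimal (fun x hx => ball_subset_closedBall (hE hx)) isClosed_closedBall
  exact h1 hz.1

lemma log_wk (k : ℕ) : Real.log (wk k) = -((k:ℝ) * Real.log 2) := by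
  rw [wk, Real.log_inv, Real.log_pow]

lemma freq_limsup {n : ℕ} {E : Set (Pt n)} {c₁ c₂ α β : ℝ}
    (hn : 1 ≤ n) (hE : E ⊆ ball 0 1) (hc₁ : 0 < c₁) (hc₁' : c₁ ≤ 1) (hc₂ : 1 ≤ c₂)
    (hβ : 0 < β) (hβ1 : β ≤ 1) (hα : 1 ≤ α)
    (hsep' : ∀ x ∈ E, ∀ y ∈ E, y ≠ x → c₁ * (1 - ‖x‖) ^ α < dist y x)
    (hwa' : ∀ x ∈ E, ∃ z ∈ limitSet E, dist x z ≤ c₂ * (1 - ‖x‖) ^ β)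
    {σ : ℝ} (hσ0 : 0 ≤ σ)
    (hfreq : ∃ᶠ (k : ℕ) in atTop, (2:ℝ) ^ ((k:ℝ) * σ) ≤ ((EkSet E k).ncard : ℝ))
    {L' : ℝ} (hL' : L' < (σ - (n:ℝ)*(α-β))/β) :
    ENNReal.ofReal L' ≤ upperBoxDim (limitSet E) := by
  classical
  set δf : ℕ → ℝ := fun k => c₂ * wk k ^ β with hδf
  have hδfpos : ∀ k, 0 < δf k := fun k => by
    have := Real.rpow_pos_of_pos (wk_pos k) β
    rw [hδf]; positivity
  set den : ℕ → ℝ := fun k => (k:ℝ) * (β * Real.log 2) - Real.log c₂ with hden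
  have hlogδf : ∀ k, -Real.log (δf k) = den k := by
    intro k
    rw [hδf, hden]
    simp only
    rw [Real.log_mul (by linarith) (Real.rpow_pos_of_pos (wk_pos k) β).ne',
      Real.log_rpow (wk_pos k), log_wk]
    ring
  set A : ℝ := Real.log (8*c₂/c₁) + α * Real.log 2 with hA
  set num : ℕ → ℝ := fun k => (k:ℝ) * ((σ - (n:ℝ)*(α-β)) * Real.log 2) - (n:ℝ) * A with hnum
  -- key: for k with the count property, log of packing number ≥ num k
  have hkey : ∀ (k : ℕ), (2:ℝ) ^ ((k:ℝ) * σ) ≤ ((EkSet E k).ncard : ℝ) →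
      num k ≤ Real.log (((packingNumber (limitSet E) (δf k)).toNat : ℝ)) := by
    intro k hcount
    have hfin := Ek_finite hn hE hc₁ hc₁' hα hsep' k
    obtain ⟨N, hN1, hN2⟩ := key_count hE hc₁ hc₁' hc₂ hβ hβ1 hα hsep' hwa' k hfin
    set Q : ℝ := 4 * (c₂ * wk k ^ β) / rks c₁ α k with hQ
    have hrk := rks_pos hc₁ hα k
    have hQpos : 0 < Q := by
      have := Real.rpow_pos_of_pos (wk_pos k) β
      rw [hQ]; positivity
    have hm : (0:ℝ) < (2:ℝ) ^ ((k:ℝ) * σ) / Q ^ n := by positivity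
    have hNge : (2:ℝ) ^ ((k:ℝ) * σ) / Q ^ n ≤ (N:ℝ) := by
      rw [div_le_iff₀ (by positivity)]
      exact le_trans hcount hN2
    have hP : N ≤ (packingNumber (limitSet E) (δf k)).toNat :=
      toNat_packingNumber_ge (limitSet_subset_closedBall hE) (hδfpos k) hN1
    have hPge : (2:ℝ) ^ ((k:ℝ) * σ) / Q ^ n ≤ ((packingNumber (limitSet E) (δf k)).toNat : ℝ) :=
      le_trans hNge (by exact_mod_cast hP)
    refine le_trans ?_ (Real.log_le_log hm hPge)
    -- compute log of the lower bound
    have hlogQ : Real.log Q = Real.log (8*c₂/c₁) + β * Real.log (wk k) - α * Real.log (wk (k+1)) := by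
      rw [hQ, rks]
      rw [show 4 * (c₂ * wk k ^ β) / (c₁ * wk (k+1) ^ α / 2)
          = (8*c₂/c₁) * (wk k ^ β / wk (k+1) ^ α) by
        field_simp; ring]
      rw [Real.log_mul (by positivity) (div_pos (Real.rpow_pos_of_pos (wk_pos k) β)
          (Real.rpow_pos_of_pos (wk_pos (k+1)) α)).ne',
        Real.log_div (Real.rpow_pos_of_pos (wk_pos k) β).ne'
          (Real.rpow_pos_of_pos (wk_pos (k+1)) α).ne',
        Real.log_rpow (wk_pos k), Real.log_rpow (wk_pos (k+1))]
      ring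
    rw [Real.log_div (by positivity) (by positivity), Real.log_rpow (by norm_num),
      Real.log_pow, hlogQ, log_wk, log_wk, hnum, hA]
    push_cast
    ring_nf
    nlinarith [Real.log_pos (by norm_num : (1:ℝ) < 2)]
  -- eventual facts
  have hden_tendsto : Tendsto den atTop atTop := by
    rw [hden]
    apply tendsto_atTop_add_const_right
    exact Tendsto.atTop_mul_const (mul_pos hβ (Real.log_pos (by norm_num)))
      tendsto_natCast_atTop_atTop
  have hE1 : ∀ᶠ (k : ℕ) in atTop, 0 < den k := hden_tendsto.eventually_gt_atTop 0
  have hE2 : ∀ᶠ (k : ℕ) in atTop, L' * den k ≤ num k := by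
    -- num k - L' * den k = k * c + d with c > 0
    have hc : 0 < (σ - (n:ℝ)*(α-β)) * Real.log 2 - L' * (β * Real.log 2) := by
      have hlog2 : 0 < Real.log 2 := Real.log_pos (by norm_num)
      have : L' * β < σ - (n:ℝ)*(α-β) := (lt_div_iff₀ hβ).1 hL'
      nlinarith
    have htend : Tendsto (fun k : ℕ => num k - L' * den k) atTop atTop := by
      have : (fun k : ℕ => num k - L' * den k)
          = fun k : ℕ => (k:ℝ) * ((σ - (n:ℝ)*(α-β)) * Real.log 2 - L' * (β * Real.log 2))
            + (L' * Real.log c₂ - (n:ℝ) * A) := by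
        funext k; rw [hnum, hden]; ring
      rw [this]
      apply tendsto_atTop_add_const_right
      exact Tendsto.atTop_mul_const hc tendsto_natCast_atTop_atTop
    filter_upwards [htend.eventually_ge_atTop 0] with k hk
    linarith
  have hfreq2 : ∃ᶠ (k : ℕ) in atTop, ENNReal.ofReal L' ≤
      ENNReal.ofReal (Real.log (((packingNumber (limitSet E) (δf k)).toNat : ℝ))
        / (-Real.log (δf k))) := by
    refine (hfreq.and_eventually (hE1.and hE2)).mono ?_
    rintro k ⟨hcount, hden_pos, hLd⟩
    apply ENNReal.ofReal_le_ofReal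
    rw [hlogδf k, le_div_iff₀ hden_pos]
    exact le_trans hLd (hkey k hcount)
  have htendδ : Tendsto δf atTop (nhdsWithin 0 (Ioi 0)) := by
    apply tendsto_nhdsWithin_of_tendsto_nhds_of_eventually_within
    · have hq1 : wk 1 ^ β < 1 := Real.rpow_lt_one (wk_pos 1).le (by norm_num [wk]) hβ
      have heq : ∀ k : ℕ, δf k = c₂ * ((wk 1 ^ β) ^ k) := by
        intro k
        rw [hδf]
        simp only
        congr 1
        have hwk1 : wk k = wk 1 ^ k := by
          rw [wk, wk, ← inv_pow]; norm_num
        rw [hwk1, ← Real.rpow_natCast (wk 1) k, ← Real.rpow_mul (wk_pos 1).le, mul_comm,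
          Real.rpow_mul (wk_pos 1).le, Real.rpow_natCast]
      have : Tendsto (fun k : ℕ => c₂ * ((wk 1 ^ β) ^ k)) atTop (nhds (c₂ * 0)) :=
        Tendsto.const_mul c₂
          (tendsto_pow_atTop_nhds_zero_of_lt_one (Real.rpow_pos_of_pos (wk_pos 1) β).le hq1)
      rw [mul_zero] at this
      exact (Filter.tendsto_congr heq).2 this
    · exact Eventually.of_forall fun k => mem_Ioi.2 (hδfpos k)
  have hfreqδ : ∃ᶠ δ in nhdsWithin (0:ℝ) (Ioi 0), ENNReal.ofReal L' ≤
      ENNReal.ofReal (Real.log (((packingNumber (limitSet E) δ).toNat : ℝ)) / (-Real.log δ)) :=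
    htendδ.frequently hfreq2
  exact le_limsup_of_frequently_le hfreqδ

lemma freq_of_div {n : ℕ} {E : Set (Pt n)} (hE : E ⊆ ball 0 1)
    (hfin : ∀ k, (EkSet E k).Finite) {s σ : ℝ} (hσ0 : 0 ≤ σ) (hσs : σ < s)
    (hdiv : accSeries E s = ⊤) :
    ∃ᶠ (k : ℕ) in atTop, (2:ℝ) ^ ((k:ℝ) * σ) ≤ ((EkSet E k).ncard : ℝ) := by
  rw [frequently_atTop]
  intro K
  by_contra hcon
  push_neg at hcon
  have := accSeries_lt_top_of_counts hE hfin hσ0 hσs K (fun k hk => (hcon k hk).le)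
  rw [hdiv] at this
  exact lt_irrefl _ this

lemma n1_count {E : Set (Pt 1)} {c₁ α : ℝ} (hE : E ⊆ ball 0 1) (hc₁ : 0 < c₁)
    (hc₁' : c₁ ≤ 1) (hα : 1 ≤ α)
    (hsep' : ∀ x ∈ E, ∀ y ∈ E, y ≠ x → c₁ * (1 - ‖x‖) ^ α < dist y x)
    (k : ℕ) (hk : 1 ≤ k) :
    ((EkSet E k).ncard : ℝ) ≤ (2:ℝ)^(1+α) / c₁ * (2:ℝ)^((k:ℝ)*(α-1)) := by
  have hfin := Ek_finite le_rfl hE hc₁ hc₁' hα hsep' k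
  set S := hfin.toFinset with hS
  have hrk := rks_pos hc₁ hα k
  have hwa : wk (k+1) ^ α ≤ wk (k+1) := by
    have := Real.rpow_le_rpow_of_exponent_ge (wk_pos (k+1)) (wk_le_one (k+1)) hα
    rwa [Real.rpow_one] at this
  have h2r : 2 * rks c₁ α k ≤ wk (k+1) := by
    rw [rks]
    have h0 := (wk_pos (k+1))
    have h1 : 0 < wk (k+1) ^ α := Real.rpow_pos_of_pos h0 α
    nlinarith
  have hwk1 : wk k ≤ 2⁻¹ := by
    have := wk_anti hk
    rwa [show wk 1 = (2:ℝ)⁻¹ by rw [wk]; norm_num] at this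
  have hann := card_sep_annulus le_rfl S (r := rks c₁ α k) (a := 1 - wk k) (b := 1 - wk (k+1))
    hrk (by nlinarith [wk_anti (show k ≤ k+1 by omega)]) (by linarith [wk_anti (show k ≤ k+1 by omega)])
    (fun x hx => by
      have hmem : x ∈ EkSet E k := hfin.mem_toFinset.1 hx
      constructor
      · linarith [hmem.2.2]
      · linarith [hmem.2.1])
    ((Ek_pairwise_sep hα hsep' k hc₁).mono (by rw [hS]; simp))
  rw [pow_one, pow_one, pow_one] at hann
  -- card * r ≤ wk (k+1) + 2 r ≤ wk k
  have hcard : (S.card : ℝ) * rks c₁ α k ≤ wk k := by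
    have hww : wk (k+1) * 2 = wk k := by
      rw [wk, wk, pow_succ]; field_simp
    nlinarith
  have hle : (S.card : ℝ) ≤ wk k / rks c₁ α k := by
    rw [le_div_iff₀ hrk]; exact hcard
  have hmul : ∀ x y : ℝ, (2:ℝ)^x * (2:ℝ)^y = (2:ℝ)^(x+y) := fun x y => (Real.rpow_add two_pos x y).symm
  have heq : wk k / rks c₁ α k = (2:ℝ)^(1+α) / c₁ * (2:ℝ)^((k:ℝ)*(α-1)) := by
    rw [div_eq_iff hrk.ne', rks, wk_eq_rpow k, wk_rpow (k+1) α]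
    push_cast
    have e1 : (2:ℝ)^((1:ℝ)+α)/c₁ * (2:ℝ)^((k:ℝ)*(α-1)) * (c₁ * (2:ℝ)^(-((k:ℝ)+1)*α)/2)
        = (2:ℝ)^((1:ℝ)+α) * (2:ℝ)^((k:ℝ)*(α-1)) * (2:ℝ)^(-((k:ℝ)+1)*α) / 2 := by
      field_simp
    rw [show ((1:ℝ)+α) = ((1:ℝ)+α) from rfl] at e1
    calc (2:ℝ)^(-(k:ℝ))
        = (2:ℝ)^((((1:ℝ) + α) + ((k:ℝ)*(α-1)) + (-((k:ℝ)+1)*α)) - 1) := by congr 1; ring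
      _ = (2:ℝ)^((((1:ℝ) + α) + ((k:ℝ)*(α-1)) + (-((k:ℝ)+1)*α))) / (2:ℝ)^(1:ℝ) := by
          rw [Real.rpow_sub two_pos]
      _ = (2:ℝ)^((1:ℝ)+α) * (2:ℝ)^((k:ℝ)*(α-1)) * (2:ℝ)^(-((k:ℝ)+1)*α) / 2 := by
          rw [hmul, hmul, Real.rpow_one]
      _ = (2:ℝ)^((1:ℝ)+α)/c₁ * (2:ℝ)^((k:ℝ)*(α-1)) * (c₁ * (2:ℝ)^(-((k:ℝ)+1)*α)/2) := e1.symm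
  rw [Set.ncard_eq_toFinset_card _ hfin]
  calc ((hfin.toFinset.card : ℕ) : ℝ) ≤ wk k / rks c₁ α k := hle
    _ = (2:ℝ)^(1+α) / c₁ * (2:ℝ)^((k:ℝ)*(α-1)) := heq

lemma n1_critExp {E : Set (Pt 1)} {c₁ α : ℝ} (hE : E ⊆ ball 0 1) (hc₁ : 0 < c₁)
    (hc₁' : c₁ ≤ 1) (hα : 1 ≤ α)
    (hsep' : ∀ x ∈ E, ∀ y ∈ E, y ≠ x → c₁ * (1 - ‖x‖) ^ α < dist y x) :
    critExp E ≤ ENNReal.ofReal (2*(α-1)) := by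
  apply ENNReal.le_of_forall_pos_le_add
  intro ε hε _
  set εr : ℝ := (ε : ℝ) with hεr
  have hεr0 : 0 < εr := hε
  set s : ℝ := α - 1 + εr with hs
  set σ : ℝ := α - 1 + εr/2 with hσ
  have hσ0 : 0 ≤ σ := by rw [hσ]; linarith
  have hσs : σ < s := by rw [hσ, hs]; linarith
  set C : ℝ := (2:ℝ)^(1+α) / c₁ with hC
  have hCpos : 0 < C := by
    have : (0:ℝ) < (2:ℝ)^(1+α) := Real.rpow_pos_of_pos two_pos _
    rw [hC]; positivity
  -- find K with C ≤ 2^(k εr/2) for k ≥ K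
  have htend : Tendsto (fun k : ℕ => ((2:ℝ)^(εr/2)) ^ k) atTop atTop :=
    tendsto_pow_atTop_atTop_of_one_lt (Real.one_lt_rpow_iff_of_pos two_pos |>.2 (Or.inl ⟨by norm_num, by linarith⟩))
  obtain ⟨K, hK⟩ := (htend.eventually_ge_atTop C).exists_forall_of_atTop
  have hcnt : ∀ k, max K 1 ≤ k → ((EkSet E k).ncard : ℝ) ≤ (2:ℝ) ^ ((k:ℝ) * σ) := by
    intro k hk
    have h1 := n1_count hE hc₁ hc₁' hα hsep' k (le_trans (le_max_right K 1) hk)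
    have h2 : C ≤ ((2:ℝ)^(εr/2)) ^ k := hK k (le_trans (le_max_left K 1) hk)
    have h3 : ((2:ℝ)^(εr/2)) ^ k = (2:ℝ)^((k:ℝ)*(εr/2)) := by
      rw [← Real.rpow_natCast ((2:ℝ)^(εr/2)) k, ← Real.rpow_mul (by norm_num)]
      ring_nf
    calc ((EkSet E k).ncard : ℝ) ≤ C * (2:ℝ)^((k:ℝ)*(α-1)) := h1
      _ ≤ (2:ℝ)^((k:ℝ)*(εr/2)) * (2:ℝ)^((k:ℝ)*(α-1)) := by
          rw [← h3]
          exact mul_le_mul_of_nonneg_right h2 (Real.rpow_nonneg (by norm_num) _)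
      _ = (2:ℝ)^((k:ℝ)*σ) := by
          rw [← Real.rpow_add two_pos]
          congr 1
          rw [hσ]; ring
  have hlt : accSeries E s < ⊤ :=
    accSeries_lt_top_of_counts hE (fun k => Ek_finite le_rfl hE hc₁ hc₁' hα hsep' k)
      hσ0 hσs (max K 1) hcnt
  have hs0 : 0 ≤ s := by rw [hs]; linarith
  have hcrit : critExp E ≤ ENNReal.ofReal s := by
    have hlt' : accSeries E ((s.toNNReal : ℝ≥0) : ℝ) < ⊤ := by
      rwa [Real.coe_toNNReal s hs0]
    calc critExp E ≤ (s.toNNReal : ℝ≥0∞) :=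
          iInf_le_of_le s.toNNReal (iInf_le_of_le hlt' le_rfl)
      _ = ENNReal.ofReal s := rfl
  refine hcrit.trans ?_
  rw [hs, show α - 1 + εr = (α-1) + εr from rfl, ENNReal.ofReal_add (by linarith) hεr0.le]
  have h4 : ENNReal.ofReal (α-1) ≤ ENNReal.ofReal (2*(α-1)) :=
    ENNReal.ofReal_le_ofReal (by linarith)
  have h5 : ENNReal.ofReal εr = (ε : ℝ≥0∞) := by
    rw [hεr, ENNReal.ofReal_coe_nnreal]
  rw [h5]
  exact add_le_add h4 le_rfl


/-- **Theorem: if `E` is `α`-separated and `β`-well-approximated, then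
`upper box dim L(E) ≥ δ(E) − 2(nα − (n−1)β − 1)`.** -/
theorem critExp_sub_le_upperBoxDim {n : ℕ} (hn : 1 ≤ n) (α β : ℝ)
    (hβ : 0 < β) (hβ1 : β ≤ 1) (hα : 1 ≤ α)
    (E : Set (Pt n)) (hE : E ⊆ ball 0 1) (hdisc : IsDiscreteSet E)
    (hsep : AlphaSeparated E α) (hwa : BetaWellApproximated E β) :
    critExp E - ENNReal.ofReal (2 * (n * α - (n - 1) * β - 1)) ≤
      upperBoxDim (limitSet E) := by
  obtain ⟨c₀, hc₀, hc₀prop⟩ := hsep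
  obtain ⟨c₂, hc₂, hwa'⟩ := hwa
  set c₁ : ℝ := min c₀ 1 with hc₁def
  have hc₁ : 0 < c₁ := lt_min hc₀ one_pos
  have hc₁' : c₁ ≤ 1 := min_le_right _ _
  have hsep' : ∀ x ∈ E, ∀ y ∈ E, y ≠ x → c₁ * (1 - ‖x‖) ^ α < dist y x := by
    intro x hx y hy hyx
    have hxnorm : ‖x‖ < 1 := by simpa [mem_ball_zero_iff] using hE hx
    have hpow : (0:ℝ) ≤ (1 - ‖x‖) ^ α := Real.rpow_nonneg (by linarith) α
    have hnot : y ∉ closedBall x (c₀ * (1 - ‖x‖) ^ α) := by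
      intro hmem
      have : y ∈ closedBall x (c₀ * (1 - ‖x‖) ^ α) ∩ E := ⟨hmem, hy⟩
      rw [hc₀prop x hx] at this
      exact hyx this
    have h1 : c₀ * (1 - ‖x‖) ^ α < dist y x := by
      by_contra h
      push_neg at h
      exact hnot (mem_closedBall.2 h)
    calc c₁ * (1 - ‖x‖) ^ α ≤ c₀ * (1 - ‖x‖) ^ α :=
          mul_le_mul_of_nonneg_right (min_le_left _ _) hpow
      _ < dist y x := h1
  rw [tsub_le_iff_right]
  by_cases hn2 : 2 ≤ n
  · -- main case  n ≥ 2
    have hn2' : (2:ℝ) ≤ (n:ℝ) := by exact_mod_cast hn2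
    apply ENNReal.le_of_forall_nnreal_lt
    intro u hu
    obtain ⟨w, hw1, hw2⟩ := exists_between hu
    have hwne : w ≠ ⊤ := ne_top_of_lt hw2
    set v : ℝ≥0 := w.toNNReal with hvdef
    have hv : (v : ℝ≥0∞) = w := ENNReal.coe_toNNReal hwne
    have huv : (u:ℝ) < (v:ℝ) := by
      have : (u : ℝ≥0∞) < (v : ℝ≥0∞) := by rw [hv]; exact hw1
      exact_mod_cast this
    have hdiv : accSeries E (v:ℝ) = ⊤ := by
      by_contra hne
      have hlt : accSeries E ((v : ℝ≥0) : ℝ) < ⊤ := lt_top_iff_ne_top.2 hne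
      have hle : critExp E ≤ (v : ℝ≥0∞) := iInf_le_of_le v (iInf_le_of_le hlt le_rfl)
      rw [hv] at hle
      exact absurd (lt_of_lt_of_le hw2 hle) (lt_irrefl _)
    set Kc : ℝ := (n:ℝ) * α - ((n:ℝ) - 1) * β - 1 with hKc
    have hKc0 : 0 ≤ Kc := by rw [hKc]; nlinarith
    by_cases hcase : (u:ℝ) ≤ 2*Kc
    · calc (u : ℝ≥0∞) = ENNReal.ofReal (u:ℝ) := ENNReal.ofReal_coe_nnreal.symm
        _ ≤ ENNReal.ofReal (2 * ((n:ℝ) * α - ((n:ℝ) - 1) * β - 1)) :=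
            ENNReal.ofReal_le_ofReal (by rw [← hKc]; exact hcase)
        _ ≤ upperBoxDim (limitSet E) + ENNReal.ofReal (2 * ((n:ℝ) * α - ((n:ℝ) - 1) * β - 1)) :=
            le_add_self
    · push_neg at hcase
      set σ : ℝ := ((u:ℝ) + (v:ℝ))/2 with hσdef
      have hσ0 : 0 ≤ σ := by
        have := u.coe_nonneg
        have := v.coe_nonneg
        rw [hσdef]; linarith
      have hσv : σ < (v:ℝ) := by rw [hσdef]; linarith
      have huσ : (u:ℝ) < σ := by rw [hσdef]; linarith
      have hfin : ∀ k, (EkSet E k).Finite := fun k => Ek_finite hn hE hc₁ hc₁' hα hsep' k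
      have hfreq := freq_of_div hE hfin hσ0 hσv hdiv
      set L' : ℝ := (u:ℝ) - 2*Kc with hL'def
      have hL'pos : 0 < L' := by rw [hL'def]; linarith
      have hL' : L' < (σ - (n:ℝ)*(α-β))/β := by
        rw [lt_div_iff₀ hβ]
        have h1 : 0 ≤ (σ - 2*Kc)*(1-β) := by
          apply mul_nonneg _ (by linarith)
          nlinarith
        have h2 : 0 ≤ ((n:ℝ)-2)*(1-β) := by apply mul_nonneg <;> linarith
        have h3 : 0 ≤ (n:ℝ)*(α-1) := by apply mul_nonneg <;> linarith
        have h4 : 0 < (σ - (u:ℝ))*β := by apply mul_pos <;> linarith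
        rw [hL'def, hKc] at *
        nlinarith
      have hlim := freq_limsup hn hE hc₁ hc₁' hc₂ hβ hβ1 hα hsep' hwa' hσ0 hfreq hL'
      calc (u : ℝ≥0∞) = ENNReal.ofReal (u:ℝ) := ENNReal.ofReal_coe_nnreal.symm
        _ = ENNReal.ofReal (L' + 2*Kc) := by rw [hL'def]; ring_nf
        _ = ENNReal.ofReal L' + ENNReal.ofReal (2*Kc) := by
            rw [ENNReal.ofReal_add hL'pos.le (by linarith)]
        _ ≤ upperBoxDim (limitSet E) + ENNReal.ofReal (2 * ((n:ℝ) * α - ((n:ℝ) - 1) * β - 1)) := by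
            apply add_le_add hlim
            rw [hKc]
  · -- n = 1
    have hn1 : n = 1 := by omega
    subst hn1
    have h1 := n1_critExp hE hc₁ hc₁' hα hsep'
    have h2 : ENNReal.ofReal (2*(α-1))
        = ENNReal.ofReal (2 * ((1:ℕ) * α - (((1:ℕ):ℝ) - 1) * β - 1)) := by
      norm_num
    calc critExp E ≤ ENNReal.ofReal (2*(α-1)) := h1
      _ = ENNReal.ofReal (2 * (((1:ℕ):ℝ) * α - (((1:ℕ):ℝ) - 1) * β - 1)) := by norm_num
      _ ≤ upperBoxDim (limitSet E) + ENNReal.ofReal (2 * (((1:ℕ):ℝ) * α - (((1:ℕ):ℝ) - 1) * β - 1)) :=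
          le_add_self

end
end

section
/- Let n ≥ 1, let γ ∈ (0,1], and let E ⊆ 𝔻ⁿ be any discrete set. Then the Hausdorff dimension of the γ-radial limit set L_rad^γ(E) is at most δ(E)/γ. -/
open Metric Set Filter MeasureTheory
open scoped ENNReal NNReal Topology

noncomputable section

private lemma aux_tendsto {ε : ℝ} (hε : 0 < ε) :
    Tendsto (fun m : ℕ => ((1/2:ℝ)^m) ^ ε) atTop (𝓝 0) := by
  have hrw : ∀ m : ℕ, ((1/2:ℝ)^m) ^ ε = ((1/2:ℝ)^ε)^m := by
    intro m
    rw [← Real.rpow_natCast (1/2:ℝ) m, ← Real.rpow_natCast ((1/2:ℝ)^ε) m,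
      ← Real.rpow_mul (by norm_num), ← Real.rpow_mul (by norm_num), mul_comm]
  simp only [hrw]
  exact tendsto_pow_atTop_nhds_zero_of_lt_one (Real.rpow_nonneg (by norm_num) _)
    (Real.rpow_lt_one (by norm_num) (by norm_num) hε)

private lemma diam_cb {X : Type*} [PseudoMetricSpace X] (x : X) {ρ : ℝ} (hρ : 0 ≤ ρ) :
    EMetric.diam (Metric.closedBall x ρ) ≤ ENNReal.ofReal (2 * ρ) := by
  calc EMetric.diam (Metric.closedBall x ρ) ≤ 2 * ENNReal.ofReal ρ := by
        rw [← Metric.emetric_closedBall hρ]; exact EMetric.diam_closedBall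
    _ = ENNReal.ofReal (2*ρ) := by
        rw [ENNReal.ofReal_mul (by norm_num : (0:ℝ) ≤ 2)]
        norm_num

private lemma core {n : ℕ} {γ : ℝ} (hγ : 0 < γ) {E : Set (Pt n)} (hE : E ⊆ ball 0 1)
    {u : ℝ≥0} (hu : accSeries E (u : ℝ) < ⊤) {c : ℝ} (hc : 1 ≤ c) {s : ℝ≥0}
    (hs : (u : ℝ) < γ * (s : ℝ)) :
    dimH (gammaRadialPoints E γ c) ≤ (s : ℝ≥0∞) := by
  have hc0 : (0:ℝ) < c := lt_of_lt_of_le one_pos hc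
  have hu0 : (0:ℝ) ≤ (u:ℝ) := u.coe_nonneg
  have hspos : (0:ℝ) < (s:ℝ) := by nlinarith
  have hεpos : (0:ℝ) < γ * (s:ℝ) - (u:ℝ) := by linarith
  set ε : ℝ := γ * (s:ℝ) - (u:ℝ) with hεdef
  have hpos : ∀ x ∈ E, 0 < 1 - ‖x‖ := by
    intro x hx
    have := mem_ball_zero_iff.mp (hE hx)
    linarith
  have hu' : (∑' x : ↥E, ENNReal.ofReal ((1 - ‖(x:Pt n)‖) ^ (u:ℝ))) ≠ ⊤ := hu.ne
  haveI : Countable ↥E := by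
    have hsupp := Summable.countable_support_ennreal hu'
    have heq : (Function.support fun x : ↥E =>
        ENNReal.ofReal ((1 - ‖(x : Pt n)‖) ^ (u:ℝ))) = Set.univ := by
      ext x
      simp only [Function.mem_support, Set.mem_univ, iff_true]
      exact ne_of_gt (ENNReal.ofReal_pos.mpr (Real.rpow_pos_of_pos (hpos x x.2) _))
    rw [heq] at hsupp
    exact Set.countable_univ_iff.mp hsupp
  set r : ℕ → ℝ := fun m => (1/2:ℝ)^m with hrdef
  have hrpos : ∀ m, 0 < r m := fun m => by positivity
  set t : ℕ → ↥E → Set (Pt n) := fun m x =>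
    if 1 - ‖(x:Pt n)‖ ≤ r m then Metric.closedBall (x:Pt n) (c * (1 - ‖(x:Pt n)‖)^γ)
    else ∅ with htdef
  have hmeas : μH[((s:ℝ≥0):ℝ)] (gammaRadialPoints E γ c) = 0 := by
    refine le_antisymm ?_ zero_le
    have hle := MeasureTheory.Measure.hausdorffMeasure_le_liminf_tsum (l := atTop) ((s:ℝ≥0):ℝ) (gammaRadialPoints E γ c)
      (fun m => ENNReal.ofReal (2 * (c * r m ^ γ))) ?_ t ?_ ?_
    · refine hle.trans ?_
      have hbound : ∀ m : ℕ, (∑' x : ↥E, EMetric.diam (t m x) ^ (s:ℝ)) ≤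
          ENNReal.ofReal ((2*c)^(s:ℝ) * r m ^ ε) * accSeries E (u:ℝ) := by
        intro m
        have hpt : ∀ x : ↥E, EMetric.diam (t m x) ^ (s:ℝ) ≤
            ENNReal.ofReal ((2*c)^(s:ℝ) * r m ^ ε) *
              ENNReal.ofReal ((1 - ‖(x:Pt n)‖) ^ (u:ℝ)) := by
          intro x
          obtain ⟨x, hx⟩ := x
          have ha : 0 < 1 - ‖x‖ := hpos x hx
          by_cases h : 1 - ‖x‖ ≤ r m
          · simp only [htdef, if_pos h]
            set a : ℝ := 1 - ‖x‖ with hadef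
            have hρ : (0:ℝ) < c * a ^ γ := by
              have := Real.rpow_pos_of_pos ha γ
              positivity
            calc EMetric.diam (Metric.closedBall x (c * a^γ)) ^ (s:ℝ)
                ≤ (ENNReal.ofReal (2 * (c * a^γ))) ^ (s:ℝ) :=
                  ENNReal.rpow_le_rpow (diam_cb x hρ.le) hspos.le
              _ = ENNReal.ofReal ((2 * (c * a^γ)) ^ (s:ℝ)) :=
                  ENNReal.ofReal_rpow_of_pos (by positivity)
              _ ≤ ENNReal.ofReal ((2*c)^(s:ℝ) * r m ^ ε * a ^ (u:ℝ)) := by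
                  refine ENNReal.ofReal_le_ofReal ?_
                  have h1 : (2 * (c * a^γ)) ^ (s:ℝ) = (2*c)^(s:ℝ) * a ^ (γ*(s:ℝ)) := by
                    rw [← mul_assoc, Real.mul_rpow (by positivity) (by positivity),
                      ← Real.rpow_mul ha.le]
                  have hgs : γ*(s:ℝ) = (u:ℝ) + ε := by rw [hεdef]; ring
                  have h2 : a ^ (γ*(s:ℝ)) = a ^ (u:ℝ) * a ^ ε := by
                    rw [hgs, Real.rpow_add ha]
                  have h3 : a ^ ε ≤ r m ^ ε := Real.rpow_le_rpow ha.le h hεpos.le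
                  have h4 : (0:ℝ) ≤ a ^ (u:ℝ) := Real.rpow_nonneg ha.le _
                  have h5 : (0:ℝ) ≤ (2*c)^(s:ℝ) := Real.rpow_nonneg (by positivity) _
                  rw [h1, h2]
                  nlinarith [mul_nonneg h5 h4, Real.rpow_nonneg (hrpos m).le ε]
              _ = ENNReal.ofReal ((2*c)^(s:ℝ) * r m ^ ε) * ENNReal.ofReal (a ^ (u:ℝ)) := by
                  rw [ENNReal.ofReal_mul (by positivity)]
          · simp only [htdef, if_neg h, EMetric.diam_empty]
            rw [show EMetric.diam (∅ : Set (Pt n)) = 0 from EMetric.diam_empty, ENNReal.zero_rpow_of_pos hspos]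
            exact zero_le
        calc (∑' x : ↥E, EMetric.diam (t m x) ^ (s:ℝ))
            ≤ ∑' x : ↥E, ENNReal.ofReal ((2*c)^(s:ℝ) * r m ^ ε) *
                ENNReal.ofReal ((1 - ‖(x:Pt n)‖) ^ (u:ℝ)) := ENNReal.tsum_le_tsum hpt
          _ = ENNReal.ofReal ((2*c)^(s:ℝ) * r m ^ ε) * accSeries E (u:ℝ) :=
              ENNReal.tsum_mul_left
      refine (liminf_le_liminf (Eventually.of_forall hbound)).trans ?_
      have h0 : Tendsto (fun m : ℕ => (2*c)^(s:ℝ) * (r m ^ ε)) atTop (𝓝 0) := by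
        have h := (aux_tendsto hεpos).const_mul ((2*c)^(s:ℝ))
        rw [mul_zero] at h
        exact h
      have h1 : Tendsto (fun m : ℕ => ENNReal.ofReal ((2*c)^(s:ℝ) * r m ^ ε)) atTop
          (𝓝 0) := by
        have := ENNReal.tendsto_ofReal h0
        simpa using this
      have h2 := ENNReal.Tendsto.mul_const h1 (Or.inr hu.ne)
      rw [zero_mul] at h2
      exact le_of_eq h2.liminf_eq
    · have h0 : Tendsto (fun m : ℕ => 2 * (c * (r m ^ γ))) atTop (𝓝 0) := by
        have h := ((aux_tendsto hγ).const_mul c).const_mul 2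
        rw [mul_zero, mul_zero] at h
        exact h
      have := ENNReal.tendsto_ofReal h0
      simpa using this
    · refine Eventually.of_forall fun m => fun x => ?_
      obtain ⟨x, hx⟩ := x
      have ha : 0 < 1 - ‖x‖ := hpos x hx
      by_cases h : 1 - ‖x‖ ≤ r m
      · simp only [htdef, if_pos h]
        refine (diam_cb x (by positivity)).trans (ENNReal.ofReal_le_ofReal ?_)
        have hγa : (1 - ‖x‖) ^ γ ≤ r m ^ γ := Real.rpow_le_rpow ha.le h hγ.le
        nlinarith
      · simp only [htdef, if_neg h, EMetric.diam_empty]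
        exact zero_le
    · refine Eventually.of_forall fun m => fun z hz => ?_
      obtain ⟨-, h2⟩ := hz
      obtain ⟨x, hxE, hd, hle⟩ := h2 (r m) (hrpos m)
      have ha : 0 < 1 - ‖x‖ := hpos x hxE
      have h1x : 1 - ‖x‖ ≤ r m := by
        have h3 : (1 - ‖x‖) ^ γ ≤ r m ^ γ := by
          have := (mul_le_mul_iff_right₀ hc0).mp hle
          exact this
        exact (Real.rpow_le_rpow_iff ha.le (hrpos m).le hγ).mp h3
      refine mem_iUnion.mpr ⟨⟨x, hxE⟩, ?_⟩
      simp only [htdef, if_pos h1x]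
      exact Metric.mem_closedBall.mpr (by rw [dist_comm]; exact hd)
  exact dimH_le_of_hausdorffMeasure_ne_top (by rw [hmeas]; exact ENNReal.zero_ne_top)

private lemma union_sub {n : ℕ} {γ : ℝ} {E : Set (Pt n)} (hE : E ⊆ ball 0 1) :
    gammaRadialLimitSet E γ ⊆ ⋃ k : ℕ, gammaRadialPoints E γ ((k:ℝ)+1) := by
  intro z hz
  rw [gammaRadialLimitSet] at hz
  simp only [mem_iUnion, exists_prop, mem_Ici] at hz
  obtain ⟨c, hc, hz1, hz2⟩ := hz
  have hc0 : (0:ℝ) < c := lt_of_lt_of_le one_pos hc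
  have hck : c ≤ (⌈c⌉₊:ℝ)+1 := (Nat.le_ceil c).trans (by linarith)
  refine mem_iUnion.mpr ⟨⌈c⌉₊, hz1, fun r hr => ?_⟩
  obtain ⟨x, hxE, hd, hle⟩ := hz2 r hr
  have ha : 0 ≤ 1 - ‖x‖ := by
    have := mem_ball_zero_iff.mp (hE hxE); linarith
  have hγa : (0:ℝ) ≤ (1-‖x‖)^γ := Real.rpow_nonneg ha _
  have hne : (1-‖x‖)^γ ≤ r^γ := le_of_mul_le_mul_left hle hc0
  have hk0 : (0:ℝ) ≤ (⌈c⌉₊:ℝ) := Nat.cast_nonneg _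
  exact ⟨x, hxE, hd.trans (by nlinarith), by nlinarith⟩

/-- **Theorem: `dim_H L_rad^γ(E) ≤ δ(E) / γ` for any discrete `E ⊆ 𝔻ⁿ` and `γ ∈ (0,1]`.** -/
theorem dimH_gammaRadialLimitSet_le {n : ℕ} (hn : 1 ≤ n) (γ : ℝ)
    (hγ : 0 < γ) (hγ1 : γ ≤ 1)
    (E : Set (Pt n)) (hE : E ⊆ ball 0 1) (hdisc : IsDiscreteSet E) :
    dimH (gammaRadialLimitSet E γ) ≤ critExp E / ENNReal.ofReal γ := by
  have hγ0 : ENNReal.ofReal γ ≠ 0 := ne_of_gt (ENNReal.ofReal_pos.mpr hγ)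
  rw [ENNReal.le_div_iff_mul_le (Or.inl hγ0) (Or.inl ENNReal.ofReal_ne_top), critExp]
  refine le_iInf fun u => le_iInf fun hu => ?_
  rw [← ENNReal.le_div_iff_mul_le (Or.inl hγ0) (Or.inl ENNReal.ofReal_ne_top)]
  refine le_of_forall_gt_imp_ge_of_dense fun t ht => ?_
  rcases eq_or_ne t ⊤ with rfl | htop
  · exact le_top
  have hts : t = ((t.toNNReal : ℝ≥0) : ℝ≥0∞) := (ENNReal.coe_toNNReal htop).symm
  have h1 : (u : ℝ≥0∞) < t * ENNReal.ofReal γ :=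
    (ENNReal.div_lt_iff (Or.inl hγ0) (Or.inl ENNReal.ofReal_ne_top)).mp ht
  have hus : (u:ℝ) < γ * (t.toNNReal : ℝ) := by
    have h2 : ((u : ℝ≥0∞)).toReal < (t * ENNReal.ofReal γ).toReal := by
      refine (ENNReal.toReal_lt_toReal ENNReal.coe_ne_top ?_).mpr h1
      exact ENNReal.mul_ne_top htop ENNReal.ofReal_ne_top
    rw [ENNReal.toReal_mul, ENNReal.coe_toReal, ENNReal.toReal_ofReal hγ.le,
      mul_comm] at h2
    exact h2
  rw [hts]
  calc dimH (gammaRadialLimitSet E γ)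
      ≤ dimH (⋃ k : ℕ, gammaRadialPoints E γ ((k:ℝ)+1)) := dimH_mono (union_sub hE)
    _ = ⨆ k : ℕ, dimH (gammaRadialPoints E γ ((k:ℝ)+1)) := dimH_iUnion _
    _ ≤ _ := iSup_le fun k => core hγ hE hu
        (by have := (Nat.cast_nonneg k : (0:ℝ) ≤ k); linarith) hus

end
end

section
/- Let n ≥ 2. There exists a discrete, separated set E ⊆ 𝔻ⁿ with limit set L(E) = S^{n-1} (so dim_H L(E) = dim_B L(E) = n − 1) and critical exponent δ(E) = 0. (For example, take E = ∪_k E_k where each E_k consists of k maximally separated points all at Euclidean distance 2^{-k} from S^{n-1}.) -/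
open Metric Set Filter
open scoped ENNReal NNReal

open Topology MeasureTheory Module

noncomputable section

namespace Construction

variable {n : ℕ}

/-- the radial factor -/
def t (k : ℕ) : ℝ := (2:ℝ)⁻¹ ^ (k+1)

lemma t_pos (k : ℕ) : 0 < t k := by rw [t]; positivity

lemma t_lt_one (k : ℕ) : t k < 1 := by
  calc (2:ℝ)⁻¹^(k+1) ≤ (2:ℝ)⁻¹^1 := by
        apply pow_le_pow_of_le_one (by norm_num) (by norm_num) (by omega)
    _ < 1 := by norm_num

lemma t_le (k l : ℕ) (h : k ≤ l) : t l ≤ t k :=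
  pow_le_pow_of_le_one (by norm_num) (by norm_num) (by omega)

lemma t_succ (k : ℕ) : t (k+1) = t k / 2 := by rw [t, t, pow_succ]; ring

lemma t_inj : Function.Injective t := by
  intro a b h
  have h2 : ((2:ℝ)^(a+1))⁻¹ = ((2:ℝ)^(b+1))⁻¹ := by
    simpa [t, inv_pow] using h
  have h3 := inv_injective h2
  have := pow_right_injective₀ (two_pos (α := ℝ)) (by norm_num) h3
  omega

variable (u : ℕ → Pt n)

/-- the points -/
def g (k : ℕ) : Pt n := (1 - t k) • u k.unpair.2

lemma norm_g (hu : ∀ j, ‖u j‖ = 1) (k : ℕ) : ‖g u k‖ = 1 - t k := by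
  have h1 : (0:ℝ) ≤ 1 - t k := by linarith [t_lt_one k]
  rw [g, norm_smul, hu, Real.norm_eq_abs, abs_of_nonneg h1, mul_one]

lemma one_sub_norm_g (hu : ∀ j, ‖u j‖ = 1) (k : ℕ) : 1 - ‖g u k‖ = t k := by
  rw [norm_g u hu]; ring

lemma g_inj (hu : ∀ j, ‖u j‖ = 1) : Function.Injective (g u) := by
  intro a b h
  have : t a = t b := by
    have := congrArg norm h
    rw [norm_g u hu, norm_g u hu] at this
    linarith
  exact t_inj this

lemma dist_g_lower (hu : ∀ j, ‖u j‖ = 1) {k l : ℕ} (h : k ≠ l) :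
    t (min k l) / 2 ≤ dist (g u k) (g u l) := by
  have habs : |‖g u k‖ - ‖g u l‖| ≤ dist (g u k) (g u l) := abs_norm_sub_norm_le _ _
  have hk : ‖g u k‖ = 1 - t k := norm_g u hu k
  have hl : ‖g u l‖ = 1 - t l := norm_g u hu l
  have key : t (min k l) / 2 ≤ |t l - t k| := by
    rcases lt_or_gt_of_ne h with hkl | hkl
    · have h1 : t l ≤ t (k+1) := t_le _ _ (by omega)
      have h2 := t_succ k
      have h3 : |t l - t k| = t k - t l := by
        rw [abs_of_nonpos (by linarith [t_le k l hkl.le])]; ring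
      rw [h3, min_eq_left hkl.le]; linarith
    · have h1 : t k ≤ t (l+1) := t_le _ _ (by omega)
      have h2 := t_succ l
      have h3 : |t l - t k| = t l - t k := by
        rw [abs_of_nonneg (by linarith [t_le l k hkl.le])]
      rw [h3, min_eq_right hkl.le]; linarith
  calc t (min k l) / 2 ≤ |t l - t k| := key
    _ = |‖g u k‖ - ‖g u l‖| := by rw [hk, hl]; ring_nf
    _ ≤ _ := habs

/-- The set E. -/
def E : Set (Pt n) := Set.range (g u)

lemma E_subset_ball (hu : ∀ j, ‖u j‖ = 1) : E u ⊆ ball (0 : Pt n) 1 := by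
  rintro x ⟨k, rfl⟩
  simp only [mem_ball, dist_zero_right, norm_g u hu]
  linarith [t_pos k]

lemma E_separated (hu : ∀ j, ‖u j‖ = 1) : SeparatedSet (E u) := by
  refine ⟨1/4, by norm_num, by norm_num, ?_⟩
  rintro x ⟨k, rfl⟩
  ext y
  simp only [mem_inter_iff, mem_closedBall, mem_singleton_iff]
  constructor
  · rintro ⟨hd, l, rfl⟩
    by_contra hne
    have hlk : l ≠ k := fun h => hne (by rw [h])
    have h1 := dist_g_lower u hu hlk
    have h2 : t k ≤ t (min l k) := t_le _ _ (min_le_right _ _)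
    rw [one_sub_norm_g u hu k] at hd
    have := t_pos k
    linarith
  · rintro rfl
    refine ⟨?_, k, rfl⟩
    simp only [dist_self]
    rw [one_sub_norm_g u hu k]
    have := t_pos k
    positivity

lemma E_discrete (hu : ∀ j, ‖u j‖ = 1) : IsDiscreteSet (E u) := by
  obtain ⟨c, hc0, _, hc⟩ := E_separated u hu
  intro x hx
  refine ⟨c * (1 - ‖x‖), ?_, hc x hx⟩
  obtain ⟨k, rfl⟩ := hx
  rw [one_sub_norm_g u hu k]
  have := t_pos k
  positivity

-- new material

lemma t_small {ρ : ℝ} (hρ : 0 < ρ) : ∃ i : ℕ, ∀ k ≥ i, t k < ρ := by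
  obtain ⟨i, hi⟩ := exists_pow_lt_of_lt_one hρ (by norm_num : (2:ℝ)⁻¹ < 1)
  refine ⟨i, fun k hk => lt_of_le_of_lt ?_ hi⟩
  exact pow_le_pow_of_le_one (by norm_num) (by norm_num) (by omega)

lemma dist_g_u (hu : ∀ j, ‖u j‖ = 1) (k : ℕ) : dist (g u k) (u k.unpair.2) = t k := by
  rw [dist_eq_norm, g]
  have : (1 - t k) • u k.unpair.2 - u k.unpair.2 = (-(t k)) • u k.unpair.2 := by
    rw [sub_smul, one_smul] at *
    module
  rw [this, norm_smul, hu, Real.norm_eq_abs, abs_neg, abs_of_pos (t_pos k), mul_one]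

lemma sphere_subset_closure (hu : ∀ j, ‖u j‖ = 1)
    (hd : ∀ z ∈ sphere (0:Pt n) 1, ∀ ε > 0, ∃ j, dist (u j) z < ε) :
    sphere (0:Pt n) 1 ⊆ closure (E u) := by
  intro z hz
  rw [Metric.mem_closure_iff]
  intro ε hε
  obtain ⟨j, hj⟩ := hd z hz (ε/2) (by linarith)
  obtain ⟨i, hi⟩ := t_small (ρ := ε/2) (by linarith)
  set k := Nat.pair i j with hk
  refine ⟨g u k, ⟨k, rfl⟩, ?_⟩
  have h2 : k.unpair.2 = j := by rw [hk, Nat.unpair_pair]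
  have h3 : dist (g u k) (u j) = t k := by rw [← h2, dist_g_u u hu]
  have h4 : t k < ε/2 := hi k (Nat.left_le_pair i j)
  calc dist z (g u k) ≤ dist z (u j) + dist (u j) (g u k) := dist_triangle _ _ _
    _ = dist (u j) z + dist (g u k) (u j) := by rw [dist_comm z (u j), dist_comm (u j) (g u k)]
    _ < ε/2 + ε/2 := by rw [h3]; exact add_lt_add hj h4
    _ = ε := by ring

lemma closure_E_subset (hu : ∀ j, ‖u j‖ = 1) :
    closure (E u) ⊆ E u ∪ sphere (0:Pt n) 1 := by
  intro w hw
  have hw1 : ‖w‖ ≤ 1 := by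
    have h1 : E u ⊆ closedBall (0:Pt n) 1 :=
      (E_subset_ball u hu).trans ball_subset_closedBall
    have := closure_minimal h1 isClosed_closedBall hw
    simpa using this
  rcases eq_or_lt_of_le hw1 with heq | hlt
  · right; simpa using heq
  left
  set ρ := (1 - ‖w‖)/2 with hρdef
  have hρ : 0 < ρ := by simp only [hρdef]; linarith
  obtain ⟨i, hi⟩ := t_small (ρ := ρ) hρ
  have hfin : (E u ∩ ball w ρ).Finite := by
    apply Set.Finite.subset ((Set.finite_Iio i).image (g u))
    rintro x ⟨⟨k, rfl⟩, hxball⟩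
    refine ⟨k, ?_, rfl⟩
    by_contra hk
    have hk' : i ≤ k := by simpa using hk
    have h1 : t k < ρ := hi k hk'
    have h2 : ‖g u k‖ ≤ ‖w‖ + dist (g u k) w := by
      calc ‖g u k‖ = dist (g u k) 0 := by simp
        _ ≤ dist (g u k) w + dist w 0 := dist_triangle _ _ _
        _ = ‖w‖ + dist (g u k) w := by rw [dist_zero_right]; ring
    have h3 : dist (g u k) w < ρ := by simpa [mem_ball] using hxball
    have h4 : ‖g u k‖ = 1 - t k := norm_g u hu k
    simp only [hρdef] at h1 h3
    linarith
  have hsplit : closure (E u) = closure (E u ∩ ball w ρ) ∪ closure (E u \ ball w ρ) := by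
    rw [← closure_union, Set.inter_union_diff]
  rw [hsplit] at hw
  rcases hw with hw | hw
  · have : E u ∩ ball w ρ = closure (E u ∩ ball w ρ) := (hfin.isClosed.closure_eq).symm
    rw [← this] at hw
    exact hw.1
  · exfalso
    rw [Metric.mem_closure_iff] at hw
    obtain ⟨b, hb, hdb⟩ := hw ρ hρ
    exact hb.2 (by simpa [mem_ball, dist_comm] using hdb)

lemma limitSet_eq (hu : ∀ j, ‖u j‖ = 1)
    (hd : ∀ z ∈ sphere (0:Pt n) 1, ∀ ε > 0, ∃ j, dist (u j) z < ε) :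
    limitSet (E u) = sphere (0:Pt n) 1 := by
  have hES : ∀ x ∈ E u, x ∉ sphere (0:Pt n) 1 := by
    intro x hx hs
    have := E_subset_ball u hu hx
    simp only [mem_ball, dist_zero_right] at this
    simp only [mem_sphere_iff_norm, sub_zero] at hs
    rw [hs] at this; exact lt_irrefl 1 this
  apply Set.Subset.antisymm
  · rintro w ⟨hw1, hw2⟩
    rcases closure_E_subset u hu hw1 with h | h
    · exact absurd h hw2
    · exact h
  · intro z hz
    exact ⟨sphere_subset_closure u hu hd hz, fun hzE => hES z hzE hz⟩

lemma accSeries_lt_top (hu : ∀ j, ‖u j‖ = 1) {s : ℝ} (hs : 0 < s) :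
    accSeries (E u) s < ⊤ := by
  have hinj := g_inj u hu
  have h1 : accSeries (E u) s = ∑' k : ℕ, ENNReal.ofReal ((1 - ‖g u k‖) ^ s) := by
    rw [accSeries]
    have h := Equiv.tsum_eq (Equiv.ofInjective (g u) hinj) (fun x : Set.range (g u) => ENNReal.ofReal ((1 - ‖(x : Pt n)‖) ^ s))
    exact h.symm.trans (tsum_congr fun k => by rw [Equiv.ofInjective_apply])
  set q : ℝ := (2:ℝ)⁻¹ ^ s with hq
  have hq0 : 0 ≤ q := Real.rpow_nonneg (by norm_num) s
  have hq1 : q < 1 := Real.rpow_lt_one (by norm_num) (by norm_num) hs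
  have h2 : ∀ k : ℕ, (1 - ‖g u k‖) ^ s = q ^ (k+1) := by
    intro k
    rw [one_sub_norm_g u hu k, t]
    rw [← Real.rpow_natCast ((2:ℝ)⁻¹) (k+1), ← Real.rpow_natCast q (k+1), hq,
      ← Real.rpow_mul (by norm_num), ← Real.rpow_mul (by norm_num), mul_comm]
  rw [h1]
  simp only [h2]
  have hsumm : Summable (fun k : ℕ => q ^ (k+1)) := by
    simpa [pow_succ, mul_comm] using (summable_geometric_of_lt_one hq0 hq1).mul_left q
  rw [← ENNReal.ofReal_tsum_of_nonneg (fun k => by positivity) hsumm]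
  exact ENNReal.ofReal_lt_top

lemma critExp_zero (hu : ∀ j, ‖u j‖ = 1) : critExp (E u) = 0 := by
  refine le_antisymm ?_ zero_le
  refine ENNReal.le_of_forall_pos_le_add (fun ε hε _ => ?_)
  rw [zero_add]
  have hcond : accSeries (E u) ((ε:ℝ≥0):ℝ) < ⊤ :=
    accSeries_lt_top u hu (by exact_mod_cast hε)
  exact iInf₂_le (ε : ℝ≥0) hcond

end Construction

namespace SphereDim
variable {m : ℕ}

lemma norm_sq_eq (x : Pt m) : ‖x‖^2 = ∑ i, (x i)^2 := by
  rw [EuclideanSpace.norm_eq, Real.sq_sqrt (by positivity)]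
  simp [Real.norm_eq_abs, sq_abs]

lemma eq_one_of_sq_eq_one {a : ℝ} (h0 : 0 ≤ a) (h : a^2 = 1) : a = 1 := by
  have h2 : (a - 1) * (a + 1) = 0 := by nlinarith
  rcases mul_eq_zero.1 h2 with h3 | h3
  · linarith
  · linarith

/-- lift into the sphere -/
def lift (y : Pt m) : Pt (m+1) := WithLp.toLp 2 (Fin.snoc (α := fun _ => ℝ) y (Real.sqrt (1 - ‖y‖^2)))

lemma lift_mem_sphere {y : Pt m} (hy : ‖y‖ ≤ 1) : lift y ∈ sphere (0:Pt (m+1)) 1 := by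
  have h1 : 0 ≤ 1 - ‖y‖^2 := by nlinarith [norm_nonneg y]
  have h2 : ‖lift y‖^2 = 1 := by
    rw [norm_sq_eq]
    rw [Fin.sum_univ_castSucc]
    have hc : ∀ k : Fin m, (lift y) k.castSucc = y k := fun k => by dsimp only [lift]; exact Fin.snoc_castSucc _ _ _
    have hl : (lift y) (Fin.last m) = Real.sqrt (1 - ‖y‖^2) := by dsimp only [lift]; exact Fin.snoc_last _ _
    rw [hl, Real.sq_sqrt h1]
    have : ∑ k : Fin m, ((lift y) k.castSucc)^2 = ∑ k : Fin m, (y k)^2 := by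
      exact Finset.sum_congr rfl (fun k _ => by rw [hc k])
    rw [this, ← norm_sq_eq]
    ring
  simp only [mem_sphere_iff_norm, sub_zero]
  exact eq_one_of_sq_eq_one (norm_nonneg _) h2

/-- projection forgetting the last coordinate -/
def proj (x : Pt (m+1)) : Pt m := WithLp.toLp 2 (fun k : Fin m => x k.castSucc)

lemma proj_lipschitz : LipschitzWith 1 (proj (m := m)) := by
  apply LipschitzWith.of_dist_le_mul
  intro x y
  simp only [NNReal.coe_one, one_mul, EuclideanSpace.dist_eq]
  apply Real.sqrt_le_sqrt
  rw [Fin.sum_univ_castSucc]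
  have : ∀ k : Fin m, dist (proj x k) (proj y k) ^2 = dist (x k.castSucc) (y k.castSucc)^2 :=
    fun k => rfl
  simp only [this]
  exact le_add_of_nonneg_right (by positivity)

lemma proj_lift (y : Pt m) : proj (lift y) = y := by
  ext k
  simp only [proj, lift]
  exact Fin.snoc_castSucc _ _ k

lemma closedBall_subset_proj_image :
    closedBall (0:Pt m) 1 ⊆ proj '' (sphere (0:Pt (m+1)) 1) := by
  intro y hy
  simp only [mem_closedBall, dist_zero_right] at hy
  exact ⟨lift y, lift_mem_sphere hy, proj_lift y⟩

lemma dimH_sphere_ge : (m : ℝ≥0∞) ≤ dimH (sphere (0:Pt (m+1)) 1) := by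
  have h1 : dimH (closedBall (0:Pt m) 1) = (m : ℝ≥0∞) := by
    rw [Real.dimH_of_mem_nhds (closedBall_mem_nhds (0:Pt m) one_pos)]
    rw [finrank_euclideanSpace_fin]
  calc (m : ℝ≥0∞) = dimH (closedBall (0:Pt m) 1) := h1.symm
    _ ≤ dimH (proj '' (sphere (0:Pt (m+1)) 1)) := dimH_mono closedBall_subset_proj_image
    _ ≤ dimH (sphere (0:Pt (m+1)) 1) := proj_lipschitz.dimH_image_le _

/-- chart maps -/
def chart (i : Fin (m+1)) (ε : ℝ) (y : Pt m) : Pt (m+1) :=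
  WithLp.toLp 2 (Fin.insertNth (α := fun _ => ℝ) i (ε * Real.sqrt (1 - ‖y‖^2)) y)

lemma chart_contDiffOn (i : Fin (m+1)) (ε : ℝ) :
    ContDiffOn ℝ 1 (chart (m := m) i ε) (ball 0 1) := by
  have hsc : ContDiffOn ℝ 1 (fun y : Pt m => ε * Real.sqrt (1 - ‖y‖^2)) (ball 0 1) := by
    apply ContDiffOn.mul contDiffOn_const
    intro y hy
    have hpos : 0 < 1 - ‖y‖^2 := by
      simp only [mem_ball, dist_zero_right] at hy
      nlinarith [norm_nonneg y]
    have h1 : ContDiffAt ℝ 1 Real.sqrt (1 - ‖y‖^2) := Real.contDiffAt_sqrt (ne_of_gt hpos)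
    have h2 : ContDiff ℝ 1 (fun y : Pt m => 1 - ‖y‖^2) :=
      contDiff_const.sub (contDiff_norm_sq ℝ)
    exact (h1.comp y h2.contDiffAt).contDiffWithinAt
  -- into pi
  have key : ContDiffOn ℝ 1 (fun y : Pt m => (fun j => chart i ε y j : Fin (m+1) → ℝ)) (ball 0 1) := by
    apply contDiffOn_pi.2
    intro j
    rcases eq_or_ne j i with rfl | hji
    · have : ∀ y : Pt m, chart j ε y j = ε * Real.sqrt (1 - ‖y‖^2) := fun y =>
        by dsimp only [chart]; exact Fin.insertNth_apply_same j _ _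
      simpa only [this] using hsc
    · obtain ⟨k, hk⟩ := Fin.exists_succAbove_eq hji
      have : ∀ y : Pt m, chart i ε y j = y k := fun y => by
        rw [← hk]; dsimp only [chart]; exact Fin.insertNth_apply_succAbove i _ _ _
      simp only [this]
      exact (ContDiff.contDiffOn (EuclideanSpace.proj (𝕜 := ℝ) k).contDiff)
  exact (EuclideanSpace.equiv (Fin (m+1)) ℝ).symm.contDiff.comp_contDiffOn key

lemma sphere_subset_charts :
    sphere (0:Pt (m+1)) 1 ⊆
      ⋃ i : Fin (m+1), (chart i 1 '' closedBall 0 (Real.sqrt (1 - 1/(m+1))) ∪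
        chart i (-1) '' closedBall 0 (Real.sqrt (1 - 1/(m+1)))) := by
  intro z hz
  simp only [mem_sphere_iff_norm, sub_zero] at hz
  have hsum : ∑ i, (z i)^2 = 1 := by rw [← norm_sq_eq, hz]; norm_num
  have hex : ∃ i, 1/((m:ℝ)+1) ≤ (z i)^2 := by
    by_contra hc
    push_neg at hc
    have := Finset.sum_lt_sum_of_nonempty (Finset.univ_nonempty (α := Fin (m+1)))
      (f := fun i => (z i)^2) (g := fun _ => 1/((m:ℝ)+1)) (fun i _ => hc i)
    rw [hsum] at this
    simp only [Finset.sum_const, Finset.card_univ, Fintype.card_fin, nsmul_eq_mul] at this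
    rw [mul_one_div] at this
    have h2 : ((m:ℝ)+1) ≠ 0 := by positivity
    have h3 : ((m+1:ℕ):ℝ) = (m:ℝ)+1 := by push_cast; ring
    rw [h3, div_self h2] at this
    exact lt_irrefl 1 this
  obtain ⟨i, hi⟩ := hex
  set y : Pt m := WithLp.toLp 2 (fun k => z (i.succAbove k)) with hy
  have hsum2 : ‖y‖^2 = 1 - (z i)^2 := by
    rw [norm_sq_eq]
    have := Fin.sum_univ_succAbove (fun j => (z j)^2) i
    rw [hsum] at this
    simp only [hy]
    linarith [this]
  have hyK : y ∈ closedBall (0:Pt m) (Real.sqrt (1 - 1/(m+1))) := by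
    simp only [mem_closedBall, dist_zero_right]
    have h1 : ‖y‖ = Real.sqrt (‖y‖^2) := (Real.sqrt_sq (norm_nonneg y)).symm
    rw [h1]
    apply Real.sqrt_le_sqrt
    rw [hsum2]
    push_cast
    linarith
  have hsqrt : Real.sqrt (1 - ‖y‖^2) = |z i| := by
    rw [hsum2]
    have : 1 - (1 - (z i)^2) = (z i)^2 := by ring
    rw [this, Real.sqrt_sq_eq_abs]
  apply mem_iUnion.2
  refine ⟨i, ?_⟩
  rcases le_or_gt 0 (z i) with hzi | hzi
  · apply mem_union_left
    refine ⟨y, hyK, ?_⟩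
    show WithLp.toLp 2 (Fin.insertNth (α := fun _ => ℝ) i (1 * Real.sqrt (1 - ‖y‖^2)) y) = z
    rw [hsqrt, one_mul, abs_of_nonneg hzi]
    exact congrArg (WithLp.toLp 2) (Fin.insertNth_self_removeNth i z.ofLp)
  · apply mem_union_right
    refine ⟨y, hyK, ?_⟩
    show WithLp.toLp 2 (Fin.insertNth (α := fun _ => ℝ) i ((-1) * Real.sqrt (1 - ‖y‖^2)) y) = z
    rw [hsqrt, abs_of_neg hzi]
    have : (-1 : ℝ) * -(z i) = z i := by ring
    rw [this]
    exact congrArg (WithLp.toLp 2) (Fin.insertNth_self_removeNth i z.ofLp)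

lemma dimH_sphere_le : dimH (sphere (0:Pt (m+1)) 1) ≤ (m : ℝ≥0∞) := by
  have hK : closedBall (0:Pt m) (Real.sqrt (1 - 1/(m+1))) ⊆ ball 0 1 := by
    apply closedBall_subset_ball
    have h1 : (1:ℝ) - 1/(m+1) < 1 := by
      have : (0:ℝ) < 1/(m+1) := by positivity
      linarith
    calc Real.sqrt (1 - 1/(m+1)) < Real.sqrt 1 := by
          apply Real.sqrt_lt_sqrt ?_ h1
          · have : (1:ℝ)/(m+1) ≤ 1 := by
              rw [div_le_one (by positivity)]
              push_cast; linarith [Nat.cast_nonneg (α := ℝ) m]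
            linarith
      _ = 1 := Real.sqrt_one
  have himg : ∀ (i : Fin (m+1)) (ε : ℝ),
      dimH (chart i ε '' closedBall (0:Pt m) (Real.sqrt (1 - 1/(m+1)))) ≤ (m : ℝ≥0∞) := by
    intro i ε
    calc dimH (chart i ε '' closedBall (0:Pt m) (Real.sqrt (1 - 1/(m+1))))
        ≤ dimH (closedBall (0:Pt m) (Real.sqrt (1 - 1/(m+1)))) :=
          (chart_contDiffOn i ε).dimH_image_le (convex_ball _ _) hK
      _ ≤ dimH (univ : Set (Pt m)) := dimH_mono (subset_univ _)
      _ = (m : ℝ≥0∞) := by rw [Real.dimH_univ_eq_finrank, finrank_euclideanSpace_fin]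
  calc dimH (sphere (0:Pt (m+1)) 1)
      ≤ dimH (⋃ i : Fin (m+1), (chart i 1 '' closedBall 0 (Real.sqrt (1 - 1/(m+1))) ∪
          chart i (-1) '' closedBall 0 (Real.sqrt (1 - 1/(m+1))))) := dimH_mono sphere_subset_charts
    _ = ⨆ i : Fin (m+1), dimH ((chart i 1 '' closedBall 0 (Real.sqrt (1 - 1/(m+1))) ∪
          chart i (-1) '' closedBall 0 (Real.sqrt (1 - 1/(m+1))))) := dimH_iUnion _
    _ ≤ (m : ℝ≥0∞) := by
        apply iSup_le
        intro i
        rw [dimH_union]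
        exact max_le (himg i 1) (himg i (-1))

theorem dimH_sphere : dimH (sphere (0:Pt (m+1)) 1) = (m : ℝ≥0∞) :=
  le_antisymm dimH_sphere_le dimH_sphere_ge

end SphereDim

namespace PN
open SphereDim

variable {m : ℕ}

lemma pow_sub_pow_le {δ : ℝ} (hδ0 : 0 ≤ δ) (hδ1 : δ ≤ 1) (N : ℕ) :
    (1+δ)^N - (1-δ)^N ≤ N * 2^N * δ := by
  have key := geom_sum₂_mul (R := ℝ) (1+δ) (1-δ) N
  have h2 : (1+δ) - (1-δ) = 2*δ := by ring
  rw [h2] at key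
  have hbound : ∑ i ∈ Finset.range N, (1+δ)^i * (1-δ)^(N-1-i) ≤ N * 2^(N-1) := by
    calc ∑ i ∈ Finset.range N, (1+δ)^i * (1-δ)^(N-1-i)
        ≤ ∑ _i ∈ Finset.range N, (2:ℝ)^(N-1) := by
          apply Finset.sum_le_sum
          intro i hi
          have h3 : (1+δ)^i ≤ (2:ℝ)^i := pow_le_pow_left₀ (by linarith) (by linarith) i
          have h4 : (1-δ)^(N-1-i) ≤ 1 := pow_le_one₀ (by linarith) (by linarith)
          have h5 : (2:ℝ)^i ≤ 2^(N-1) := pow_le_pow_right₀ (by norm_num)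
            (by simp at hi; omega)
          have h6 : (0:ℝ) ≤ (1+δ)^i := by positivity
          calc (1+δ)^i * (1-δ)^(N-1-i) ≤ (1+δ)^i * 1 := by
                apply mul_le_mul_of_nonneg_left h4 h6
            _ = (1+δ)^i := by ring
            _ ≤ 2^(N-1) := le_trans h3 h5
    _ = N * 2^(N-1) := by rw [Finset.sum_const]; simp [mul_comm]
  calc (1+δ)^N - (1-δ)^N = (∑ i ∈ Finset.range N, (1+δ)^i * (1-δ)^(N-1-i)) * (2*δ) := key.symm
    _ ≤ (N * 2^(N-1)) * (2*δ) := by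
        apply mul_le_mul_of_nonneg_right hbound (by linarith)
    _ ≤ N * 2^N * δ := by
        rcases Nat.eq_zero_or_pos N with rfl | hN
        · simp
        · have : (2:ℝ)^(N-1) * 2 = 2^N := by
            rw [← pow_succ]
            congr 1
            omega
          calc (N:ℝ) * 2^(N-1) * (2*δ) = (N:ℝ) * (2^(N-1)*2) * δ := by ring
            _ = N * 2^N * δ := by rw [this]
            _ ≤ N * 2^N * δ := le_refl _

lemma card_bound {δ : ℝ} (hδ0 : 0 < δ) (hδ1 : δ ≤ 1) (Z : Finset (Pt (m+1)))
    (hZs : ↑Z ⊆ sphere (0:Pt (m+1)) 1)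
    (hZd : (Z : Set (Pt (m+1))).PairwiseDisjoint fun x => closedBall x δ) :
    (Z.card : ℝ) * δ^(m+1) ≤ (m+1) * 2^(m+1) * δ := by
  set V := volume (ball (0:Pt (m+1)) 1) with hV
  have hV0 : V ≠ 0 := (measure_ball_pos _ _ one_pos).ne'
  have hVt : V ≠ ⊤ := measure_ball_lt_top.ne
  have hfr : finrank ℝ (Pt (m+1)) = m+1 := finrank_euclideanSpace_fin
  have hballvol : ∀ x : Pt (m+1), volume (closedBall x δ) = ENNReal.ofReal (δ^(m+1)) * V := by
    intro x
    rw [Measure.addHaar_closedBall volume x hδ0.le, hfr]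
  have hmeasU : volume (⋃ x ∈ Z, closedBall x δ) = (Z.card : ℝ≥0∞) * (ENNReal.ofReal (δ^(m+1)) * V) := by
    rw [measure_biUnion_finset hZd (fun x _ => measurableSet_closedBall)]
    rw [Finset.sum_congr rfl (fun x _ => hballvol x), Finset.sum_const, nsmul_eq_mul]
  have hdisj : Disjoint (⋃ x ∈ Z, closedBall x δ) (ball (0:Pt (m+1)) (1-δ)) := by
    rw [Set.disjoint_left]
    rintro z hz hz2
    simp only [mem_iUnion] at hz
    obtain ⟨x, hxZ, hzx⟩ := hz
    have hx1 : ‖x‖ = 1 := by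
      have := hZs hxZ
      simpa [mem_sphere_iff_norm] using this
    simp only [mem_ball, dist_zero_right] at hz2
    simp only [mem_closedBall] at hzx
    have : ‖x‖ ≤ ‖z‖ + dist z x := by
      calc ‖x‖ = dist x 0 := by simp
        _ ≤ dist x z + dist z 0 := dist_triangle _ _ _
        _ = ‖z‖ + dist z x := by rw [dist_comm x z, dist_zero_right]; ring
    linarith
  have hsub : (⋃ x ∈ Z, closedBall x δ) ∪ ball (0:Pt (m+1)) (1-δ) ⊆ closedBall 0 (1+δ) := by
    apply Set.union_subset
    · apply Set.iUnion₂_subset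
      intro x hxZ
      apply closedBall_subset_closedBall'
      have hx1 : ‖x‖ = 1 := by
        have := hZs hxZ
        simpa [mem_sphere_iff_norm] using this
      rw [dist_zero_right, hx1]
      linarith
    · intro z hz
      simp only [mem_ball, dist_zero_right] at hz
      simp only [mem_closedBall, dist_zero_right]
      linarith
  have hmeas : volume ((⋃ x ∈ Z, closedBall x δ) ∪ ball (0:Pt (m+1)) (1-δ))
      = (Z.card : ℝ≥0∞) * (ENNReal.ofReal (δ^(m+1)) * V) + ENNReal.ofReal ((1-δ)^(m+1)) * V := by
    rw [measure_union hdisj measurableSet_ball, hmeasU,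
      Measure.addHaar_ball volume _ (by linarith : (0:ℝ) ≤ 1-δ), hfr]
  have hle : (Z.card : ℝ≥0∞) * (ENNReal.ofReal (δ^(m+1)) * V) + ENNReal.ofReal ((1-δ)^(m+1)) * V
      ≤ ENNReal.ofReal ((1+δ)^(m+1)) * V := by
    have hcb : ENNReal.ofReal ((1+δ)^(m+1)) * V = volume (closedBall (0:Pt (m+1)) (1+δ)) := by
      rw [Measure.addHaar_closedBall volume _ (by linarith : (0:ℝ) ≤ 1+δ), hfr]
    rw [← hmeas, hcb]
    exact measure_mono hsub
  -- cancel V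
  have hle2 : (Z.card : ℝ≥0∞) * ENNReal.ofReal (δ^(m+1)) + ENNReal.ofReal ((1-δ)^(m+1))
      ≤ ENNReal.ofReal ((1+δ)^(m+1)) := by
    rw [← ENNReal.mul_le_mul_iff_left hV0 hVt, add_mul]
    calc (Z.card : ℝ≥0∞) * ENNReal.ofReal (δ^(m+1)) * V + ENNReal.ofReal ((1-δ)^(m+1)) * V
        = (Z.card : ℝ≥0∞) * (ENNReal.ofReal (δ^(m+1)) * V) + ENNReal.ofReal ((1-δ)^(m+1)) * V := by
          ring_nf
      _ ≤ ENNReal.ofReal ((1+δ)^(m+1)) * V := hle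
  have hreal : (Z.card : ℝ) * δ^(m+1) + (1-δ)^(m+1) ≤ (1+δ)^(m+1) := by
    have h1 : ENNReal.ofReal ((Z.card : ℝ) * δ^(m+1) + (1-δ)^(m+1))
        ≤ ENNReal.ofReal ((1+δ)^(m+1)) := by
      rw [ENNReal.ofReal_add (by positivity) (pow_nonneg (by linarith) _),
        ENNReal.ofReal_mul (Nat.cast_nonneg _), ENNReal.ofReal_natCast]
      exact hle2
    rw [ENNReal.ofReal_le_ofReal_iff (by positivity)] at h1
    exact h1
  have := pow_sub_pow_le hδ0.le hδ1 (m+1)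
  push_cast at this ⊢
  linarith

variable {m : ℕ}

/-- grid points -/
def gridPt (δ : ℝ) (M : ℕ) (v : Fin m → Fin M) : Pt m := WithLp.toLp 2 (fun k => 3*δ*(v k : ℝ))

lemma gridPt_norm {δ : ℝ} (hδ : 0 < δ) {M : ℕ} (hM : 3*δ*M*Real.sqrt m ≤ 1)
    (v : Fin m → Fin M) : ‖gridPt δ M v‖ ≤ 1 := by
  have h1 : ‖gridPt δ M v‖^2 ≤ m * (3*δ*M)^2 := by
    rw [norm_sq_eq]
    calc ∑ k, (gridPt δ M v k)^2 ≤ ∑ _k : Fin m, (3*δ*M)^2 := by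
          apply Finset.sum_le_sum
          intro k _
          have h2 : (0:ℝ) ≤ (v k : ℝ) := Nat.cast_nonneg _
          have h3 : ((v k : ℕ) : ℝ) ≤ M := by
            have := (v k).2
            exact_mod_cast this.le
          have h4 : (0:ℝ) ≤ 3*δ*(v k : ℝ) := by positivity
          have : (3*δ*(v k:ℝ)) ≤ 3*δ*M := by nlinarith
          calc (gridPt δ M v k)^2 = (3*δ*(v k:ℝ))^2 := rfl
            _ ≤ (3*δ*M)^2 := by nlinarith
      _ = m * (3*δ*M)^2 := by rw [Finset.sum_const]; simp [mul_comm]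
  have h5 : ‖gridPt δ M v‖ ≤ Real.sqrt (m * (3*δ*M)^2) := by
    rw [← Real.sqrt_sq (norm_nonneg _)]
    exact Real.sqrt_le_sqrt h1
  have h6 : Real.sqrt (m * (3*δ*M)^2) = Real.sqrt m * (3*δ*M) := by
    rw [Real.sqrt_mul (Nat.cast_nonneg m), Real.sqrt_sq (by positivity)]
  calc ‖gridPt δ M v‖ ≤ Real.sqrt m * (3*δ*M) := h5.trans_eq h6
    _ = 3*δ*M*Real.sqrt m := by ring
    _ ≤ 1 := hM

lemma gridPt_dist {δ : ℝ} (hδ : 0 < δ) {M : ℕ} {v w : Fin m → Fin M} (hvw : v ≠ w) :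
    3*δ ≤ dist (gridPt δ M v) (gridPt δ M w) := by
  obtain ⟨k, hk⟩ := Function.ne_iff.1 hvw
  have h1 : 3*δ ≤ dist (gridPt δ M v k) (gridPt δ M w k) := by
    have h2 : dist (gridPt δ M v k) (gridPt δ M w k) = 3*δ*|((v k : ℕ):ℝ) - ((w k : ℕ):ℝ)| := by
      rw [Real.dist_eq]
      show |3*δ*(v k:ℝ) - 3*δ*(w k:ℝ)| = _
      rw [← mul_sub, abs_mul, abs_of_pos (by positivity)]
    have h3 : (1:ℝ) ≤ |((v k : ℕ):ℝ) - ((w k : ℕ):ℝ)| := by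
      have h4 : (v k : ℕ) ≠ (w k : ℕ) := fun h => hk (Fin.ext h)
      have h5 : ((v k : ℕ):ℝ) - ((w k : ℕ):ℝ) ≠ 0 := by
        intro h
        apply h4
        have : ((v k : ℕ):ℝ) = ((w k : ℕ):ℝ) := by linarith
        exact_mod_cast this
      have h6 : ((v k:ℕ):ℝ) - ((w k:ℕ):ℝ) = (((v k:ℕ):ℤ) - ((w k:ℕ):ℤ) : ℤ) := by push_cast; ring
      rw [h6]
      rw [← Int.cast_abs]
      have h4' : ((v k:ℕ):ℤ) ≠ ((w k:ℕ):ℤ) := by exact_mod_cast h4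
      have h7 : (1:ℤ) ≤ |((v k:ℕ):ℤ) - ((w k:ℕ):ℤ)| := Int.one_le_abs (sub_ne_zero.2 h4')
      exact_mod_cast h7
    rw [h2]
    nlinarith
  calc 3*δ ≤ dist (gridPt δ M v k) (gridPt δ M w k) := h1
    _ ≤ dist (gridPt δ M v) (gridPt δ M w) := by
        rw [EuclideanSpace.dist_eq]
        rw [← Real.sqrt_sq dist_nonneg]
        apply Real.sqrt_le_sqrt
        have := Finset.single_le_sum (f := fun k => dist (gridPt δ M v k) (gridPt δ M w k)^2)
          (fun i _ => by positivity) (Finset.mem_univ k)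
        exact this

lemma packing_exists {δ : ℝ} (hδ : 0 < δ) {M : ℕ} (hM : 3*δ*M*Real.sqrt m ≤ 1) :
    ∃ Z : Finset (Pt (m+1)), ↑Z ⊆ sphere (0:Pt (m+1)) 1 ∧
      (Z : Set (Pt (m+1))).PairwiseDisjoint (fun x => closedBall x δ) ∧
      Z.card = M^m := by
  classical
  have hinj : Function.Injective (fun v : Fin m → Fin M => lift (gridPt δ M v)) := by
    intro v w h
    have h1 : gridPt δ M v = gridPt δ M w := by
      rw [← proj_lift (gridPt δ M v), ← proj_lift (gridPt δ M w)]
      exact congrArg proj h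
    by_contra hvw
    have := gridPt_dist hδ (M := M) hvw
    rw [h1, dist_self] at this
    linarith
  refine ⟨Finset.image (fun v : Fin m → Fin M => lift (gridPt δ M v)) Finset.univ, ?_, ?_, ?_⟩
  · intro x hx
    simp only [Finset.coe_image, Set.mem_image] at hx
    obtain ⟨v, _, rfl⟩ := hx
    exact lift_mem_sphere (gridPt_norm hδ hM v)
  · rintro x hx y hy hxy
    simp only [Finset.coe_image, Set.mem_image] at hx hy
    obtain ⟨v, _, rfl⟩ := hx
    obtain ⟨w, _, rfl⟩ := hy
    have hvw : v ≠ w := fun h => hxy (by rw [h])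
    apply closedBall_disjoint_closedBall
    have h2 : dist (gridPt δ M v) (gridPt δ M w) ≤ dist (lift (gridPt δ M v)) (lift (gridPt δ M w)) := by
      have := proj_lipschitz (m := m) |>.dist_le_mul (lift (gridPt δ M v)) (lift (gridPt δ M w))
      rw [proj_lift, proj_lift] at this
      simpa using this
    have h3 := gridPt_dist hδ (M := M) hvw
    linarith
  · rw [Finset.card_image_of_injective _ hinj, Finset.card_univ]
    simp [Fintype.card_fun]


variable {m : ℕ}

/-- real-valued count -/
def N (m : ℕ) (δ : ℝ) : ℕ := (packingNumber (sphere (0:Pt (m+1)) 1) δ).toNat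

lemma pn_le {δ : ℝ} (hδ0 : 0 < δ) (hδ1 : δ ≤ 1) :
    packingNumber (sphere (0:Pt (m+1)) 1) δ
      ≤ (Nat.floor ((m+1) * 2^(m+1) / δ^m : ℝ) : ℕ∞) := by
  apply iSup_le; intro Z
  apply iSup_le; intro hZs
  apply iSup_le; intro hZd
  have h1 := card_bound hδ0 hδ1 Z hZs hZd
  have h2 : (Z.card : ℝ) ≤ (m+1) * 2^(m+1) / δ^m := by
    rw [le_div_iff₀ (by positivity)]
    have h3 : δ^(m+1) = δ^m * δ := pow_succ δ m
    calc (Z.card:ℝ) * δ^m = (Z.card:ℝ) * δ^(m+1) / δ := by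
          rw [h3]; field_simp
      _ ≤ (m+1) * 2^(m+1) * δ / δ := by gcongr
      _ = (m+1) * 2^(m+1) := by field_simp
  have h4 : Z.card ≤ Nat.floor ((m+1) * 2^(m+1) / δ^m : ℝ) := Nat.le_floor h2
  exact_mod_cast Nat.cast_le.2 h4

lemma pn_ne_top {δ : ℝ} (hδ0 : 0 < δ) (hδ1 : δ ≤ 1) :
    packingNumber (sphere (0:Pt (m+1)) 1) δ ≠ ⊤ :=
  fun h => by simpa [h] using pn_le (m := m) hδ0 hδ1

lemma pn_ge {δ : ℝ} (hδ : 0 < δ) {M : ℕ} (hM : 3*δ*M*Real.sqrt m ≤ 1) :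
    ((M^m : ℕ) : ℕ∞) ≤ packingNumber (sphere (0:Pt (m+1)) 1) δ := by
  obtain ⟨Z, hZs, hZd, hcard⟩ := packing_exists hδ hM
  calc ((M^m : ℕ) : ℕ∞) = (Z.card : ℕ∞) := by rw [hcard]
    _ ≤ _ := by
        apply le_iSup_of_le Z
        apply le_iSup_of_le hZs
        apply le_iSup_of_le hZd
        exact le_rfl

lemma N_bounds {δ : ℝ} (hδ0 : 0 < δ) (hδ1 : δ ≤ 1) {M : ℕ} (hM : 3*δ*M*Real.sqrt m ≤ 1) :
    M^m ≤ N m δ ∧ (N m δ : ℝ) ≤ (m+1) * 2^(m+1) / δ^m := by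
  have hne := pn_ne_top (m := m) hδ0 hδ1
  constructor
  · have h1 := pn_ge hδ0 hM
    have h2 : ((M^m : ℕ) : ℕ∞) ≤ ((N m δ : ℕ) : ℕ∞) := by
      rw [N, ENat.coe_toNat hne]
      exact h1
    exact_mod_cast h2
  · have h1 := pn_le (m := m) hδ0 hδ1
    have h2 : ((N m δ : ℕ) : ℕ∞) ≤ (Nat.floor ((m+1) * 2^(m+1) / δ^m : ℝ) : ℕ∞) := by
      rw [N, ENat.coe_toNat hne]
      exact h1
    have h3 : N m δ ≤ Nat.floor ((m+1) * 2^(m+1) / δ^m : ℝ) := by exact_mod_cast h2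
    calc (N m δ : ℝ) ≤ (Nat.floor ((m+1) * 2^(m+1) / δ^m : ℝ) : ℝ) := by exact_mod_cast h3
      _ ≤ (m+1) * 2^(m+1) / δ^m := Nat.floor_le (by positivity)


variable {m : ℕ}

lemma r_bounds (hm : 1 ≤ m) {δ : ℝ} (hδ0 : 0 < δ)
    (hδ1 : δ < min (1/2) (1/(12*Real.sqrt m))) :
    (m : ℝ) - (m * Real.log (24*Real.sqrt m)) / (-Real.log δ)
      ≤ Real.log (N m δ) / (-Real.log δ)
    ∧ Real.log (N m δ) / (-Real.log δ)
      ≤ (m : ℝ) + Real.log (((m:ℝ)+1) * 2^(m+1)) / (-Real.log δ) := by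
  have hsm : 1 ≤ Real.sqrt m := by
    rw [show (1:ℝ) = Real.sqrt 1 by simp]
    exact Real.sqrt_le_sqrt (by exact_mod_cast hm)
  set b : ℝ := 12 * Real.sqrt m with hb
  have hb1 : 12 ≤ b := by nlinarith
  have hδhalf : δ < 1/2 := lt_of_lt_of_le hδ1 (min_le_left _ _)
  have hδb : δ < 1/b := lt_of_lt_of_le hδ1 (min_le_right _ _)
  have hδle1 : δ ≤ 1 := by linarith
  set x : ℝ := 1/(6*δ*Real.sqrt m) with hx
  have hxpos : 0 < x := by positivity
  have hδblt : δ * b < 1 := by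
    rw [lt_div_iff₀ (by linarith : (0:ℝ) < b)] at hδb
    linarith
  have hx2 : 2 ≤ x := by
    rw [hx, le_div_iff₀ (by positivity)]
    nlinarith
  set M : ℕ := Nat.floor x with hM
  have hMx : (M:ℝ) ≤ x := Nat.floor_le hxpos.le
  have hM1 : 1 ≤ M := by
    apply Nat.le_floor
    norm_num
    linarith
  have hMge : x - 1 < M := Nat.sub_one_lt_floor x
  have hMge2 : 1/(24*Real.sqrt m*δ) ≤ (M:ℝ) := by
    have h1 : x/2 ≤ x - 1 := by linarith
    have h2 : x/2 = 1/(12*Real.sqrt m*δ) := by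
      rw [hx]
      rw [div_div]
      congr 1
      ring
    have h3 : 1/(24*Real.sqrt m*δ) ≤ 1/(12*Real.sqrt m*δ) := by
      apply div_le_div_of_nonneg_left (by norm_num) (by positivity)
      nlinarith
    linarith
  have h3δ : 3*δ*M*Real.sqrt m ≤ 1 := by
    have h1 : 3*δ*(M:ℝ)*Real.sqrt m ≤ 3*δ*x*Real.sqrt m := by
      have : (0:ℝ) ≤ 3*δ*Real.sqrt m := by positivity
      nlinarith
    have h2 : 3*δ*x*Real.sqrt m = 1/2 := by
      rw [hx]
      field_simp
      ring
    linarith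
  obtain ⟨hNge, hNle⟩ := N_bounds hδ0 hδle1 h3δ
  have hL : 0 < -Real.log δ := by
    have := Real.log_neg hδ0 (by linarith)
    linarith
  have hNpos : 1 ≤ N m δ := le_trans (Nat.one_le_iff_ne_zero.2 (pow_ne_zero m (by omega))) hNge
  have hNposR : (0:ℝ) < N m δ := by exact_mod_cast hNpos
  set c : ℝ := 24 * Real.sqrt m with hc
  have hcpos : (0:ℝ) < c := by positivity
  constructor
  · have hkey : (m:ℝ) * ((-Real.log δ) - Real.log c) ≤ Real.log (N m δ) := by
      have h0 : (0:ℝ) < 1/(c*δ) := by positivity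
      have h1 : (1/(c*δ))^m ≤ ((M:ℝ))^m := by
        apply pow_le_pow_left₀ h0.le
        rw [hc]
        exact hMge2
      have h2 : ((M:ℝ))^m ≤ (N m δ : ℝ) := by exact_mod_cast hNge
      have h3 : Real.log ((1/(c*δ))^m) ≤ Real.log (N m δ) :=
        Real.log_le_log (by positivity) (le_trans h1 h2)
      have h4 : Real.log ((1/(c*δ))^m) = m * Real.log (1/(c*δ)) := by rw [Real.log_pow]
      have h5 : Real.log (1/(c*δ)) = -Real.log c - Real.log δ := by
        rw [one_div, Real.log_inv, Real.log_mul (ne_of_gt hcpos) (ne_of_gt hδ0)]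
        ring
      rw [h4, h5] at h3
      calc (m:ℝ) * ((-Real.log δ) - Real.log c) = m * (-Real.log c - Real.log δ) := by ring
        _ ≤ Real.log (N m δ) := h3
    have heq : (m : ℝ) - (m * Real.log c) / (-Real.log δ)
        = ((m:ℝ) * ((-Real.log δ) - Real.log c)) / (-Real.log δ) := by
      have hLne : Real.log δ ≠ 0 := fun h => by rw [h] at hL; simp at hL
      field_simp
      ring
    rw [heq]
    gcongr
  · set C : ℝ := ((m:ℝ)+1) * 2^(m+1) with hC
    have hCpos : (0:ℝ) < C := by positivity
    have hkey : Real.log (N m δ) ≤ Real.log C + m * (-Real.log δ) := by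
      have h1 : Real.log (N m δ) ≤ Real.log (C/δ^m) :=
        Real.log_le_log hNposR hNle
      have h2 : Real.log (C/δ^m) = Real.log C - m * Real.log δ := by
        rw [Real.log_div (ne_of_gt hCpos) (by positivity), Real.log_pow]
      rw [h2] at h1
      calc Real.log (N m δ) ≤ Real.log C - m * Real.log δ := h1
        _ = Real.log C + m * (-Real.log δ) := by ring
    have heq : (m : ℝ) + Real.log C / (-Real.log δ)
        = (Real.log C + m * (-Real.log δ)) / (-Real.log δ) := by
      have hLne : Real.log δ ≠ 0 := fun h => by rw [h] at hL; simp at hL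
      field_simp
      ring
    rw [heq]
    gcongr

lemma tendsto_r (hm : 1 ≤ m) :
    Tendsto (fun δ : ℝ => ENNReal.ofReal (Real.log (N m δ) / (-Real.log δ)))
      (𝓝[>] (0:ℝ)) (𝓝 ((m:ℕ) : ℝ≥0∞)) := by
  have hL : Tendsto (fun δ : ℝ => -Real.log δ) (𝓝[>] (0:ℝ)) atTop :=
    tendsto_neg_atBot_atTop.comp Real.tendsto_log_nhdsGT_zero
  have hlo : Tendsto (fun δ : ℝ => (m:ℝ) - (m * Real.log (24*Real.sqrt m)) / (-Real.log δ))
      (𝓝[>] (0:ℝ)) (𝓝 ((m:ℝ) - 0)) :=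
    tendsto_const_nhds.sub (Tendsto.div_atTop tendsto_const_nhds hL)
  have hhi : Tendsto (fun δ : ℝ => (m:ℝ) + Real.log (((m:ℝ)+1) * 2^(m+1)) / (-Real.log δ))
      (𝓝[>] (0:ℝ)) (𝓝 ((m:ℝ) + 0)) :=
    tendsto_const_nhds.add (Tendsto.div_atTop tendsto_const_nhds hL)
  rw [sub_zero] at hlo
  rw [add_zero] at hhi
  have hδ₁ : (0:ℝ) < min (1/2) (1/(12*Real.sqrt m)) := by
    have hsm : 0 < Real.sqrt m := by
      apply Real.sqrt_pos.2
      exact_mod_cast (by omega : 0 < m)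
    positivity
  have hev : ∀ᶠ δ in 𝓝[>] (0:ℝ), δ ∈ Ioo 0 (min (1/2) (1/(12*Real.sqrt m))) :=
    Ioo_mem_nhdsGT_of_mem ⟨le_refl 0, hδ₁⟩
  have hreal : Tendsto (fun δ : ℝ => Real.log (N m δ) / (-Real.log δ)) (𝓝[>] (0:ℝ)) (𝓝 (m:ℝ)) := by
    apply tendsto_of_tendsto_of_tendsto_of_le_of_le' hlo hhi
    · filter_upwards [hev] with δ hδ
      exact (r_bounds hm hδ.1 hδ.2).1
    · filter_upwards [hev] with δ hδ
      exact (r_bounds hm hδ.1 hδ.2).2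
  have := ENNReal.tendsto_ofReal hreal
  rwa [ENNReal.ofReal_natCast] at this

end PN


/-- **Example: there is a discrete separated `E ⊆ 𝔻ⁿ` with `L(E) = S^{n-1}` (whence
`dim_H L(E) = dim_B L(E) = n − 1`) but `δ(E) = 0`.** -/
theorem exists_separated_full_limitSet_critExp_zero {n : ℕ} (hn : 2 ≤ n) :
    ∃ E : Set (Pt n), E ⊆ ball 0 1 ∧ IsDiscreteSet E ∧ SeparatedSet E ∧
      limitSet E = sphere 0 1 ∧
      dimH (limitSet E) = ((n - 1 : ℕ) : ℝ≥0∞) ∧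
      lowerBoxDim (limitSet E) = ((n - 1 : ℕ) : ℝ≥0∞) ∧
      upperBoxDim (limitSet E) = ((n - 1 : ℕ) : ℝ≥0∞) ∧
      critExp E = 0 := by
  obtain ⟨m, rfl⟩ : ∃ m, n = m + 1 := ⟨n - 1, by omega⟩
  have hm : 1 ≤ m := by omega
  have hcast : ((m + 1 - 1 : ℕ) : ℝ≥0∞) = ((m : ℕ) : ℝ≥0∞) := by norm_num
  -- dense sequence on the sphere
  have hne : Nonempty (sphere (0 : Pt (m+1)) 1) :=
    ⟨⟨EuclideanSpace.single (0 : Fin (m+1)) (1:ℝ), by simp [EuclideanSpace.norm_single]⟩⟩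
  obtain ⟨u₀, hu₀⟩ := TopologicalSpace.exists_dense_seq (sphere (0 : Pt (m+1)) 1)
  set u : ℕ → Pt (m+1) := fun j => (u₀ j : Pt (m+1)) with hudef
  have hu : ∀ j, ‖u j‖ = 1 := by
    intro j
    have h2 : (u₀ j : Pt (m+1)) ∈ sphere (0:Pt (m+1)) 1 := (u₀ j).2
    rw [mem_sphere_iff_norm, sub_zero] at h2
    exact h2
  have hd : ∀ z ∈ sphere (0:Pt (m+1)) 1, ∀ ε > 0, ∃ j, dist (u j) z < ε := by
    intro z hz ε hε
    obtain ⟨j, hj⟩ := hu₀.exists_dist_lt (⟨z, hz⟩ : sphere (0:Pt (m+1)) 1) hε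
    refine ⟨j, ?_⟩
    rw [dist_comm]
    simpa [Subtype.dist_eq] using hj
  refine ⟨Construction.E u, Construction.E_subset_ball u hu,
    Construction.E_discrete u hu, Construction.E_separated u hu,
    Construction.limitSet_eq u hu hd, ?_, ?_, ?_, Construction.critExp_zero u hu⟩
  · rw [Construction.limitSet_eq u hu hd, hcast]
    exact SphereDim.dimH_sphere
  · rw [Construction.limitSet_eq u hu hd, hcast]
    exact (PN.tendsto_r hm).liminf_eq
  · rw [Construction.limitSet_eq u hu hd, hcast]
    exact (PN.tendsto_r hm).limsup_eq

end
end
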